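/- arXiv:1505.08121 — 4 statements merged into one kernel-verified Lean document; each statement's English description precedes it below -/
import Mathlib

section
/- For every integer m ≥ 3, the lexicographic product C_m[4] (equivalently, the Cayley graph on (Z_2 × Z_2) × Z_m with connection set (Z_2 × Z_2) × {1, −1}) admits a 2-factorization into four C_4-factors, i.e., four spanning subgraphs each of which is a vertex-disjoint union of m cycles of length 4. -/
open SimpleGraph

/-- `F` is a decomposition of the graph `G` into edge-disjoint subgraphs. -/
def IsDecompositionF {V : Type*} {n : ℕ} (G : SimpleGraph V) (F : Fin n → SimpleGraph V) : Prop :=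
  (∀ i, F i ≤ G) ∧ (∀ i j, i ≠ j → F i ⊓ F j = ⊥) ∧ (⨆ i, F i) = G

/-- `H` is a `C_k`-factor of `G`: a spanning 2-regular subgraph all of whose
connected components have `k` vertices (hence are `k`-cycles). -/
def IsCnFactor {V : Type*} (G H : SimpleGraph V) (k : ℕ) : Prop :=
  H ≤ G ∧ (∀ v, (H.neighborSet v).ncard = 2) ∧
    ∀ v, (H.connectedComponentMk v).supp.ncard = k

/-- `H` is a perfect matching (1-factor) of `G`. -/
def IsPM {V : Type*} (G H : SimpleGraph V) : Prop :=
  H ≤ G ∧ ∀ v, (H.neighborSet v).ncard = 1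

/-- The lexicographic blow-up `C_m[4]`: the Cayley graph on `ZMod 4 × ZMod m`
with connection set `ZMod 4 × {1, -1}`. -/
def Cm4 (m : ℕ) : SimpleGraph (ZMod 4 × ZMod m) :=
  SimpleGraph.fromRel (fun u v => v.2 - u.2 = 1)

/-- The blow-up `G[k]`: replace every vertex by `k` independent vertices. -/
def blowup {V : Type*} (G : SimpleGraph V) (k : ℕ) : SimpleGraph (V × Fin k) where
  Adj u v := G.Adj u.1 v.1
  symm := ⟨fun _ _ h => G.adj_symm h⟩
  loopless := ⟨fun u h => G.irrefl h⟩

/-- which half of `ZMod 4` a row lies in. -/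
def half (a : ZMod 4) : Bool := decide (2 ≤ a.val)

/-- the two rows of a half. -/
def rowv (p j : Bool) : ZMod 4 := (if p then 2 else 0) + (if j then 1 else 0)

lemma half_rw (p j : Bool) : half (rowv p j) = p := by revert p j; decide

lemma half_eq_iff (c : ZMod 4) (p : Bool) : half c = p ↔ c = rowv p false ∨ c = rowv p true := by
  revert c p; decide

lemma rowv_ne (p : Bool) : rowv p false ≠ rowv p true := by revert p; decide

/-- column pattern -/
def pat (m : ℕ) (x : ZMod m) : Fin 3 :=
  if x.val = m - 1 then 2 else if x.val % 2 = 0 then 0 else 1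

def bfun : Fin 3 → Fin 4 → Bool
  | 0 => fun i => decide (2 ≤ i.val)
  | 1 => fun i => decide (i.val % 2 = 1)
  | 2 => fun i => xor (decide (2 ≤ i.val)) (decide (i.val % 2 = 1))

def bcol (m : ℕ) (i : Fin 4) (x : ZMod m) : Bool := bfun (pat m x) i

lemma bfun_bij : ∀ s t : Fin 3, s ≠ t → ∀ p q : Bool,
    ∃! i : Fin 4, bfun s i = p ∧ bfun t i = q := by
  simp only [ExistsUnique]; decide

lemma pat_ne {m : ℕ} (hm : 3 ≤ m) (x : ZMod m) : pat m x ≠ pat m (x + 1) := by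
  haveI : NeZero m := ⟨by omega⟩
  haveI : Fact (1 < m) := ⟨by omega⟩
  have hval : (x + 1).val = (x.val + 1) % m := by
    rw [ZMod.val_add, ZMod.val_one]
  have hx : x.val < m := ZMod.val_lt x
  unfold pat
  rcases eq_or_ne x.val (m - 1) with h | h
  · have h0 : (x + 1).val = 0 := by
      rw [hval, h, (by omega : m - 1 + 1 = m), Nat.mod_self]
    simp only [h, h0, if_pos rfl]
    have : ¬ (0 = m - 1) := by omega
    simp [this]
  · have h1 : (x + 1).val = x.val + 1 := by rw [hval]; rw [Nat.mod_eq_of_lt (by omega)]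
    rw [h1, if_neg h]
    rcases eq_or_ne (x.val + 1) (m - 1) with h2 | h2
    · rw [if_pos h2]; split <;> simp
    · rw [if_neg h2]
      rcases Nat.even_or_odd x.val with he | ho
      · have e1 : x.val % 2 = 0 := Nat.even_iff.mp he
        have e2 : ¬ ((x.val + 1) % 2 = 0) := by omega
        simp [e1, e2]
      · have e1 : ¬ (x.val % 2 = 0) := by
          have := Nat.odd_iff.mp ho; omega
        have e2 : (x.val + 1) % 2 = 0 := by
          have := Nat.odd_iff.mp ho; omega
        simp [e1, e2]

lemma bcol_bij {m : ℕ} (hm : 3 ≤ m) (x : ZMod m) (p q : Bool) :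
    ∃! i : Fin 4, bcol m i x = p ∧ bcol m i (x + 1) = q :=
  bfun_bij _ _ (pat_ne hm x) p q

/-- directed edge relation of factor `i` -/
def Dir (m : ℕ) (i : Fin 4) (u v : ZMod 4 × ZMod m) : Prop :=
  v.2 = u.2 + 1 ∧ half u.1 = bcol m i u.2 ∧ half v.1 = !(bcol m i v.2)

/-- the `i`-th factor -/
def Fac (m : ℕ) (i : Fin 4) : SimpleGraph (ZMod 4 × ZMod m) where
  Adj u v := u ≠ v ∧ (Dir m i u v ∨ Dir m i v u)
  symm := ⟨by intro u v ⟨h1, h2⟩; exact ⟨h1.symm, h2.symm⟩⟩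
  loopless := ⟨by intro u ⟨h1, _⟩; exact h1 rfl⟩

section main
variable {m : ℕ}

lemma zm_one_ne_zero (hm : 3 ≤ m) : (1 : ZMod m) ≠ 0 := by
  haveI : NeZero m := ⟨by omega⟩
  intro h
  have := Nat.le_of_dvd (by norm_num) ((ZMod.natCast_eq_zero_iff 1 m).mp (by exact_mod_cast h))
  omega

lemma zm_two_ne_zero (hm : 3 ≤ m) : (2 : ZMod m) ≠ 0 := by
  haveI : NeZero m := ⟨by omega⟩
  intro h
  have := Nat.le_of_dvd (by norm_num) ((ZMod.natCast_eq_zero_iff 2 m).mp (by exact_mod_cast h))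
  omega

lemma ne_add_one (hm : 3 ≤ m) (x : ZMod m) : x ≠ x + 1 := by
  intro h
  exact zm_one_ne_zero hm (by linear_combination -h)

lemma not_both (hm : 3 ≤ m) (u v : ZMod 4 × ZMod m) (h1 : v.2 = u.2 + 1) (h2 : u.2 = v.2 + 1) : False := by
  apply zm_two_ne_zero hm
  have : u.2 = u.2 + 1 + 1 := h1 ▸ h2
  linear_combination -this

lemma fac_le : Fac m i ≤ Cm4 m := by
  intro u v ⟨h1, h2⟩
  rw [Cm4, fromRel_adj]
  refine ⟨h1, ?_⟩
  rcases h2 with ⟨h, _⟩ | ⟨h, _⟩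
  · left; rw [h]; ring
  · right; rw [h]; ring

lemma bool_flip {a b : Bool} (h : a ≠ b) : a = !b := by cases a <;> cases b <;> simp_all

lemma bool_absurd {a b : Bool} (h : a = b) (h' : a = !b) : False := by
  cases b <;> simp_all

lemma bool_flip2 {a b : Bool} (h : a = !b) : b = !a := by cases a <;> cases b <;> simp_all

lemma fac_adj {i : Fin 4} {u v : ZMod 4 × ZMod m} :
    (Fac m i).Adj u v ↔ u ≠ v ∧ (Dir m i u v ∨ Dir m i v u) := Iff.rfl

lemma pairset_ncard (y : ZMod m) (q : Bool) :
    ({v : ZMod 4 × ZMod m | v.2 = y ∧ half v.1 = q}).ncard = 2 := by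
  have hset : {v : ZMod 4 × ZMod m | v.2 = y ∧ half v.1 = q}
      = {(rowv q false, y), (rowv q true, y)} := by
    ext ⟨c, z⟩
    simp only [Set.mem_setOf_eq, Set.mem_insert_iff, Set.mem_singleton_iff, Prod.mk.injEq]
    constructor
    · rintro ⟨rfl, hc⟩
      rcases (half_eq_iff c q).mp hc with h | h
      · exact Or.inl ⟨h, rfl⟩
      · exact Or.inr ⟨h, rfl⟩
    · rintro (⟨rfl, rfl⟩ | ⟨rfl, rfl⟩) <;> exact ⟨rfl, half_rw _ _⟩
  rw [hset]
  exact Set.ncard_pair (fun h => rowv_ne q (congrArg Prod.fst h))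

lemma neighbor_right (hm : 3 ≤ m) {i : Fin 4} {a : ZMod 4} {x : ZMod m}
    (h : half a = bcol m i x) :
    (Fac m i).neighborSet (a, x) = {v | v.2 = x + 1 ∧ half v.1 = !(bcol m i (x + 1))} := by
  ext ⟨c, y⟩
  simp only [mem_neighborSet, Set.mem_setOf_eq, fac_adj]
  constructor
  · rintro ⟨hne, ⟨h1, _, h3⟩ | ⟨_, _, h3⟩⟩
    · subst h1; exact ⟨rfl, h3⟩
    · exact (bool_absurd h h3).elim
  · rintro ⟨rfl, hc⟩
    exact ⟨fun he => ne_add_one hm x (congrArg Prod.snd he), Or.inl ⟨rfl, h, hc⟩⟩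

lemma neighbor_left (hm : 3 ≤ m) {i : Fin 4} {a : ZMod 4} {x : ZMod m}
    (h : half a = !(bcol m i x)) :
    (Fac m i).neighborSet (a, x) = {v | v.2 = x - 1 ∧ half v.1 = bcol m i (x - 1)} := by
  have hx : x - 1 + 1 = x := sub_add_cancel x 1
  ext ⟨c, y⟩
  simp only [mem_neighborSet, Set.mem_setOf_eq, fac_adj]
  constructor
  · rintro ⟨hne, ⟨_, h2, _⟩ | ⟨h1, h2, _⟩⟩
    · exact (bool_absurd h2 h).elim
    · have hy : y = x - 1 := by
        have : y + 1 = x := h1.symm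
        rw [← this]; ring
      subst hy; exact ⟨rfl, h2⟩
  · rintro ⟨rfl, hc⟩
    refine ⟨fun he => ?_, Or.inr ⟨hx.symm, hc, h⟩⟩
    have h' : x = x - 1 := congrArg Prod.snd he
    exact zm_one_ne_zero hm (by linear_combination h')

lemma closed_walk {V : Type*} {H : SimpleGraph V} {S : Set V}
    (hcl : ∀ w ∈ S, ∀ z, H.Adj w z → z ∈ S) :
    ∀ {a b : V}, H.Walk a b → a ∈ S → b ∈ S := by
  intro a b p
  induction p with
  | nil => exact id
  | cons h q ih => exact fun ha => ih (hcl _ ha _ h)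

lemma adj_of (hm : 3 ≤ m) {i : Fin 4} {c d : ZMod 4} {x : ZMod m}
    (h1 : half c = bcol m i x) (h2 : half d = !(bcol m i (x + 1))) :
    (Fac m i).Adj (c, x) (d, x + 1) :=
  ⟨fun he => ne_add_one hm x (congrArg Prod.snd he), Or.inl ⟨rfl, h1, h2⟩⟩

lemma supp_eq (hm : 3 ≤ m) {i : Fin 4} {a : ZMod 4} {x : ZMod m}
    (h : half a = bcol m i x) :
    ((Fac m i).connectedComponentMk (a, x)).supp =
      {v : ZMod 4 × ZMod m | (v.2 = x ∧ half v.1 = bcol m i x) ∨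
        (v.2 = x + 1 ∧ half v.1 = !(bcol m i (x + 1)))} := by
  set S : Set (ZMod 4 × ZMod m) := {v : ZMod 4 × ZMod m | (v.2 = x ∧ half v.1 = bcol m i x) ∨
        (v.2 = x + 1 ∧ half v.1 = !(bcol m i (x + 1)))} with hS
  have hcl : ∀ w ∈ S, ∀ z, (Fac m i).Adj w z → z ∈ S := by
    rintro ⟨c, y⟩ (⟨hy, hc⟩ | ⟨hy, hc⟩) z hz
    · subst hy
      have := (neighbor_right hm hc) ▸ (mem_neighborSet _ _ _).mpr hz
      exact Or.inr this
    · subst hy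
      have hmem := (neighbor_left hm hc) ▸ (mem_neighborSet _ _ _).mpr hz
      have hx : x + 1 - 1 = x := by ring
      rw [hx] at hmem
      exact Or.inl hmem
  apply Set.eq_of_subset_of_subset
  · intro w hw
    rw [ConnectedComponent.mem_supp_iff, ConnectedComponent.eq] at hw
    obtain ⟨p⟩ := hw.symm
    exact closed_walk hcl p (Or.inl ⟨rfl, h⟩)
  · rintro ⟨c, y⟩ (⟨hy, hc⟩ | ⟨hy, hc⟩)
    · rw [ConnectedComponent.mem_supp_iff]
      apply ConnectedComponent.sound
      rw [show y = x from hy]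
      have hmid := half_rw (!(bcol m i (x + 1))) false
      exact ((adj_of hm hc hmid).reachable).trans (adj_of hm h hmid).reachable.symm
    · rw [ConnectedComponent.mem_supp_iff]
      apply ConnectedComponent.sound
      rw [show y = x + 1 from hy]
      exact (adj_of hm h hc).reachable.symm

lemma supp_ncard_of (hm : 3 ≤ m) {i : Fin 4} {a : ZMod 4} {x : ZMod m}
    (h : half a = bcol m i x) :
    ((Fac m i).connectedComponentMk (a, x)).supp.ncard = 4 := by
  haveI : NeZero m := ⟨by omega⟩
  rw [supp_eq hm h]
  set b0 := bcol m i x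
  set q := !(bcol m i (x + 1))
  have hxx : x ≠ x + 1 := ne_add_one hm x
  have hset : {v : ZMod 4 × ZMod m | (v.2 = x ∧ half v.1 = b0) ∨
        (v.2 = x + 1 ∧ half v.1 = q)} =
      {(rowv b0 false, x), (rowv b0 true, x), (rowv q false, x + 1), (rowv q true, x + 1)} := by
    ext ⟨c, y⟩
    simp only [Set.mem_setOf_eq, Set.mem_insert_iff, Set.mem_singleton_iff, Prod.mk.injEq]
    constructor
    · rintro (⟨rfl, hc⟩ | ⟨rfl, hc⟩)
      · rcases (half_eq_iff c _).mp hc with h' | h'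
        · exact Or.inl ⟨h', rfl⟩
        · exact Or.inr (Or.inl ⟨h', rfl⟩)
      · rcases (half_eq_iff c _).mp hc with h' | h'
        · exact Or.inr (Or.inr (Or.inl ⟨h', rfl⟩))
        · exact Or.inr (Or.inr (Or.inr ⟨h', rfl⟩))
    · rintro (⟨rfl, rfl⟩ | ⟨rfl, rfl⟩ | ⟨rfl, rfl⟩ | ⟨rfl, rfl⟩)
      · exact Or.inl ⟨rfl, half_rw _ _⟩
      · exact Or.inl ⟨rfl, half_rw _ _⟩
      · exact Or.inr ⟨rfl, half_rw _ _⟩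
      · exact Or.inr ⟨rfl, half_rw _ _⟩
  rw [hset]
  have e1 : (rowv b0 false, x) ∉ ({(rowv b0 true, x), (rowv q false, x + 1), (rowv q true, x + 1)}
      : Set (ZMod 4 × ZMod m)) := by
    simp only [Set.mem_insert_iff, Set.mem_singleton_iff, Prod.mk.injEq, not_or]
    exact ⟨fun ⟨h1, _⟩ => rowv_ne b0 h1, fun ⟨_, h2⟩ => hxx h2, fun ⟨_, h2⟩ => hxx h2⟩
  have e2 : (rowv b0 true, x) ∉ ({(rowv q false, x + 1), (rowv q true, x + 1)}
      : Set (ZMod 4 × ZMod m)) := by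
    simp only [Set.mem_insert_iff, Set.mem_singleton_iff, Prod.mk.injEq, not_or]
    exact ⟨fun ⟨_, h2⟩ => hxx h2, fun ⟨_, h2⟩ => hxx h2⟩
  have e3 : (rowv q false, x + 1) ≠ (rowv q true, x + 1) :=
    fun he => rowv_ne q (congrArg Prod.fst he)
  rw [Set.ncard_insert_of_notMem e1, Set.ncard_insert_of_notMem e2, Set.ncard_pair e3]

lemma supp_ncard (hm : 3 ≤ m) (i : Fin 4) (u : ZMod 4 × ZMod m) :
    ((Fac m i).connectedComponentMk u).supp.ncard = 4 := by
  obtain ⟨a, x⟩ := u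
  by_cases h : half a = bcol m i x
  · exact supp_ncard_of hm h
  · have h' : half a = !(bcol m i x) := bool_flip h
    have hx : x - 1 + 1 = x := sub_add_cancel x 1
    have hadj : (Fac m i).Adj (rowv (bcol m i (x - 1)) false, x - 1) (a, x) := by
      refine ⟨fun he => ?_, Or.inl ⟨hx.symm, half_rw _ _, h'⟩⟩
      have h2 : x - 1 = x := congrArg Prod.snd he
      exact zm_one_ne_zero hm (by linear_combination -h2)
    rw [← ConnectedComponent.sound hadj.reachable]
    exact supp_ncard_of hm (half_rw _ _)

lemma deg_two (hm : 3 ≤ m) (i : Fin 4) (u : ZMod 4 × ZMod m) :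
    ((Fac m i).neighborSet u).ncard = 2 := by
  obtain ⟨a, x⟩ := u
  by_cases h : half a = bcol m i x
  · rw [neighbor_right hm h]; exact pairset_ncard _ _
  · rw [neighbor_left hm (bool_flip h)]; exact pairset_ncard _ _

lemma dir_unique (hm : 3 ≤ m) {i j : Fin 4} {u v : ZMod 4 × ZMod m}
    (hi : Dir m i u v) (hj : Dir m j u v) : i = j := by
  obtain ⟨h1, h2, h3⟩ := hi
  obtain ⟨_, h2', h3'⟩ := hj
  obtain ⟨k, _, hk⟩ := bcol_bij hm u.2 (half u.1) (!(half v.1))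
  have ei : i = k := hk i ⟨h2.symm, by rw [← h1]; exact bool_flip2 h3⟩
  have ej : j = k := hk j ⟨h2'.symm, by rw [← h1]; exact bool_flip2 h3'⟩
  rw [ei, ej]

lemma fac_disj (hm : 3 ≤ m) {i j : Fin 4} (hij : i ≠ j) : Fac m i ⊓ Fac m j = ⊥ := by
  ext u v
  simp only [inf_adj, bot_adj, iff_false, not_and]
  rintro ⟨hne, hi⟩ ⟨_, hj⟩
  apply hij
  rcases hi with hi | hi <;> rcases hj with hj | hj
  · exact dir_unique hm hi hj
  · exact (not_both hm u v hi.1 hj.1).elim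
  · exact (not_both hm u v hj.1 hi.1).elim
  · exact dir_unique hm hi hj

lemma fac_sup (hm : 3 ≤ m) : (⨆ i, Fac m i) = Cm4 m := by
  ext u v
  rw [iSup_adj]
  constructor
  · rintro ⟨i, h⟩; exact fac_le h
  · intro h
    rw [Cm4, fromRel_adj] at h
    obtain ⟨hne, h1 | h1⟩ := h
    · have hcol : v.2 = u.2 + 1 := by linear_combination h1
      obtain ⟨i, ⟨hi1, hi2⟩, _⟩ := bcol_bij hm u.2 (half u.1) (!(half v.1))
      exact ⟨i, hne, Or.inl ⟨hcol, hi1.symm, by rw [hcol]; exact bool_flip2 hi2⟩⟩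
    · have hcol : u.2 = v.2 + 1 := by linear_combination h1
      obtain ⟨i, ⟨hi1, hi2⟩, _⟩ := bcol_bij hm v.2 (half v.1) (!(half u.1))
      exact ⟨i, hne, Or.inr ⟨hcol, hi1.symm, by rw [hcol]; exact bool_flip2 hi2⟩⟩


end main

/-- For every `m ≥ 3`, `C_m[4]` has a 2-factorization into four `C_4`-factors. -/
theorem stmt_1 (m : ℕ) (hm : 3 ≤ m) :
    ∃ F : Fin 4 → SimpleGraph (ZMod 4 × ZMod m),
      IsDecompositionF (Cm4 m) F ∧ ∀ i, IsCnFactor (Cm4 m) (F i) 4 := by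
  refine ⟨Fac m, ⟨fun i => fac_le, fun i j hij => fac_disj hm hij, fac_sup hm⟩,
    fun i => ⟨fac_le, deg_two hm i, fun v => supp_ncard hm i v⟩⟩
end

section
/- For every integer m ≥ 3, the lexicographic product C_m[4] admits a 2-factorization into exactly two C_4-factors and two C_m-factors. -/
open SimpleGraph

namespace CmProof

variable {m : ℕ} {L : Type}

/-- Generic per-step graph. -/
def SG (lab : ZMod m → L) (succ : Fin 4 → L → ZMod 4 → Finset (ZMod 4)) (t : Fin 4) :
    SimpleGraph (ZMod 4 × ZMod m) :=
  SimpleGraph.fromRel (fun u v => v.2 = u.2 + 1 ∧ v.1 ∈ succ t (lab u.2) u.1)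

section Arith
variable (hm : 3 ≤ m)
include hm

lemma one_ne_zero' : (1 : ZMod m) ≠ 0 := by
  haveI : NeZero m := ⟨by omega⟩
  haveI : Fact (1 < m) := ⟨by omega⟩
  intro h
  have := ZMod.val_one m
  rw [h] at this
  simp at this

lemma two_ne_zero' : (2 : ZMod m) ≠ 0 := by
  haveI : NeZero m := ⟨by omega⟩
  intro h
  have : ((2 : ℕ) : ZMod m) = 0 := by push_cast; exact h
  have h2 := (ZMod.natCast_eq_zero_iff 2 m).mp this
  have := Nat.le_of_dvd (by norm_num) h2
  omega

lemma add_one_ne (i : ZMod m) : i + 1 ≠ i := by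
  intro h
  exact one_ne_zero' hm (by linear_combination h)

lemma sub_one_ne_add_one (i : ZMod m) : i - 1 ≠ i + 1 := by
  intro h
  exact two_ne_zero' hm (by linear_combination -h)

lemma add_two_ne (i : ZMod m) : i + 2 ≠ i := by
  intro h
  exact two_ne_zero' hm (by linear_combination h)

end Arith

section Graph
variable (hm : 3 ≤ m) (lab : ZMod m → L) (succ : Fin 4 → L → ZMod 4 → Finset (ZMod 4))
include hm

lemma SG_adj {t : Fin 4} {a b : ZMod 4} {i j : ZMod m} :
    (SG lab succ t).Adj (a, i) (b, j) ↔
      (j = i + 1 ∧ b ∈ succ t (lab i) a) ∨ (i = j + 1 ∧ a ∈ succ t (lab j) b) := by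
  rw [SG, SimpleGraph.fromRel_adj]
  constructor
  · rintro ⟨-, h | h⟩
    · exact Or.inl ⟨h.1, h.2⟩
    · exact Or.inr ⟨h.1, h.2⟩
  · rintro (⟨h1, h2⟩ | ⟨h1, h2⟩)
    · refine ⟨?_, Or.inl ⟨h1, h2⟩⟩
      intro he
      have h3 : i = j := congrArg Prod.snd he
      rw [← h3] at h1
      exact add_one_ne hm i h1.symm
    · refine ⟨?_, Or.inr ⟨h1, h2⟩⟩
      intro he
      have h3 : i = j := congrArg Prod.snd he
      rw [h3] at h1
      exact add_one_ne hm j h1.symm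

lemma SG_le (t : Fin 4) : SG lab succ t ≤ Cm4 m := by
  rintro ⟨a, i⟩ ⟨b, j⟩ h
  rcases (SG_adj hm lab succ).mp h with ⟨h1, -⟩ | ⟨h1, -⟩
  · refine (SimpleGraph.fromRel_adj _ _ _).mpr ⟨?_, Or.inl (by simp [h1])⟩
    intro he
    have h3 : i = j := congrArg Prod.snd he
    rw [← h3] at h1
    exact add_one_ne hm i h1.symm
  · refine (SimpleGraph.fromRel_adj _ _ _).mpr ⟨?_, Or.inr (by simp [h1])⟩
    intro he
    have h3 : i = j := congrArg Prod.snd he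
    rw [h3] at h1
    exact add_one_ne hm j h1.symm

lemma SG_disj {t s : Fin 4}
    (hdis : ∀ l (a b : ZMod 4), b ∈ succ t l a → b ∉ succ s l a) :
    SG lab succ t ⊓ SG lab succ s = ⊥ := by
  ext ⟨a, i⟩ ⟨b, j⟩
  simp only [SimpleGraph.inf_adj, SimpleGraph.bot_adj, iff_false]
  rintro ⟨ht, hs⟩
  rcases (SG_adj hm lab succ).mp ht with ⟨h1, h2⟩ | ⟨h1, h2⟩ <;>
    rcases (SG_adj hm lab succ).mp hs with ⟨g1, g2⟩ | ⟨g1, g2⟩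
  · exact hdis _ _ _ h2 g2
  · exact two_ne_zero' hm (by linear_combination -h1 - g1)
  · exact two_ne_zero' hm (by linear_combination -h1 - g1)
  · exact hdis _ _ _ h2 g2

lemma SG_sup (hcov : ∀ l (a b : ZMod 4), ∃ t, b ∈ succ t l a) :
    (⨆ t, SG lab succ t) = Cm4 m := by
  apply le_antisymm
  · exact iSup_le fun t => SG_le hm lab succ t
  · rintro ⟨a, i⟩ ⟨b, j⟩ h
    rcases (SimpleGraph.fromRel_adj _ _ _).mp h with ⟨hne, hd | hd⟩
    · obtain ⟨t, ht⟩ := hcov (lab i) a b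
      exact SimpleGraph.iSup_adj.mpr ⟨t, (SG_adj hm lab succ).mpr
        (Or.inl ⟨by linear_combination hd, ht⟩)⟩
    · obtain ⟨t, ht⟩ := hcov (lab j) b a
      exact SimpleGraph.iSup_adj.mpr ⟨t, (SG_adj hm lab succ).mpr
        (Or.inr ⟨by linear_combination hd, ht⟩)⟩

lemma SG_nbhd (t : Fin 4) (a : ZMod 4) (i : ZMod m) :
    (SG lab succ t).neighborSet (a, i) =
      (fun b => ((b : ZMod 4), i + 1)) '' ↑(succ t (lab i) a) ∪
      (fun b => ((b : ZMod 4), i - 1)) ''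
        ↑(Finset.univ.filter (fun b => a ∈ succ t (lab (i - 1)) b)) := by
  ext ⟨b, j⟩
  simp only [SimpleGraph.mem_neighborSet, SG_adj hm lab succ, Set.mem_union, Set.mem_image,
    Finset.coe_filter, Set.mem_setOf_eq, Finset.mem_coe, Finset.mem_univ, true_and]
  constructor
  · rintro (⟨h1, h2⟩ | ⟨h1, h2⟩)
    · exact Or.inl ⟨b, h2, by rw [h1]⟩
    · refine Or.inr ⟨b, ?_, ?_⟩
      · have hji : j = i - 1 := by linear_combination -h1
        rwa [← hji]
      · have hji : j = i - 1 := by linear_combination -h1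
        rw [hji]
  · rintro (⟨c, hc, he⟩ | ⟨c, hc, he⟩)
    · have hb : c = b := congrArg Prod.fst he
      have hj : i + 1 = j := congrArg Prod.snd he
      subst hb; subst hj
      exact Or.inl ⟨rfl, hc⟩
    · have hb : c = b := congrArg Prod.fst he
      have hj : i - 1 = j := congrArg Prod.snd he
      subst hb; subst hj
      exact Or.inr ⟨by ring, hc⟩

lemma SG_deg {T : L → L → Prop} (hT : ∀ i, T (lab i) (lab (i + 1))) (t : Fin 4)
    (hdeg : ∀ l l' (a : ZMod 4), T l l' →
      (succ t l' a).card + (Finset.univ.filter (fun b => a ∈ succ t l b)).card = 2) :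
    ∀ v, ((SG lab succ t).neighborSet v).ncard = 2 := by
  rintro ⟨a, i⟩
  rw [SG_nbhd hm lab succ t a i]
  have hTi : T (lab (i - 1)) (lab i) := by
    have := hT (i - 1)
    rwa [sub_add_cancel] at this
  have hinj1 : Function.Injective (fun b : ZMod 4 => ((b : ZMod 4), i + 1)) := by
    intro x y h; exact (Prod.ext_iff.mp h).1
  have hinj2 : Function.Injective (fun b : ZMod 4 => ((b : ZMod 4), i - 1)) := by
    intro x y h; exact (Prod.ext_iff.mp h).1
  rw [Set.ncard_union_eq ?disj (Set.Finite.image _ (Finset.finite_toSet _))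
      (Set.Finite.image _ (Finset.finite_toSet _)),
    Set.ncard_image_of_injective _ hinj1, Set.ncard_image_of_injective _ hinj2,
    Set.ncard_coe_finset, Set.ncard_coe_finset]
  · exact hdeg _ _ a hTi
  case disj =>
    rw [Set.disjoint_left]
    rintro ⟨b, j⟩ ⟨c, hc, he⟩ ⟨d, hd, he'⟩
    have h1 := (Prod.ext_iff.mp he).2
    have h2 := (Prod.ext_iff.mp he').2
    exact sub_one_ne_add_one hm i (h2.trans h1.symm)

end Graph

section Comp

variable {V : Type*} (H : SimpleGraph V)

lemma walk_closed {S : Set V} (hcl : ∀ x ∈ S, ∀ y, H.Adj x y → y ∈ S) :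
    ∀ {x y : V}, H.Walk x y → x ∈ S → y ∈ S := by
  intro x y w
  induction w with
  | nil => exact id
  | cons h p ih => exact fun hx => ih (hcl _ hx _ h)

lemma supp_eq {S : Set V} {v w : V} (hv : v ∈ S)
    (hcl : ∀ x ∈ S, ∀ y, H.Adj x y → y ∈ S) (hre : ∀ y ∈ S, H.Reachable w y) :
    (H.connectedComponentMk v).supp = S := by
  ext y
  rw [SimpleGraph.ConnectedComponent.mem_supp_iff, SimpleGraph.ConnectedComponent.eq]
  constructor
  · intro h
    obtain ⟨p⟩ := h
    exact walk_closed H hcl p.reverse hv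
  · intro hy
    exact ((hre v hv).symm.trans (hre y hy)).symm

lemma comp4 {v1 v2 v3 v4 v : V}
    (hv : v = v1 ∨ v = v2 ∨ v = v3 ∨ v = v4)
    (h12 : H.Adj v1 v2) (h23 : H.Adj v2 v3) (h34 : H.Adj v3 v4)
    (hcl : ∀ x, (x = v1 ∨ x = v2 ∨ x = v3 ∨ x = v4) → ∀ y, H.Adj x y →
      (y = v1 ∨ y = v2 ∨ y = v3 ∨ y = v4))
    (d12 : v1 ≠ v2) (d13 : v1 ≠ v3) (d14 : v1 ≠ v4) (d23 : v2 ≠ v3) (d24 : v2 ≠ v4)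
    (d34 : v3 ≠ v4) :
    ((H.connectedComponentMk v).supp).ncard = 4 := by
  have hS : (H.connectedComponentMk v).supp = {v1, v2, v3, v4} := by
    apply supp_eq H (S := {v1, v2, v3, v4}) (w := v1)
    · simpa using hv
    · intro x hx y hxy
      simp only [Set.mem_insert_iff, Set.mem_singleton_iff] at hx ⊢
      exact hcl x hx y hxy
    · intro y hy
      simp only [Set.mem_insert_iff, Set.mem_singleton_iff] at hy
      rcases hy with rfl | rfl | rfl | rfl
      · exact SimpleGraph.Reachable.refl _
      · exact h12.reachable
      · exact (h12.reachable).trans h23.reachable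
      · exact ((h12.reachable).trans h23.reachable).trans h34.reachable
  rw [hS]
  rw [Set.ncard_insert_of_notMem (by simp [d12, d13, d14]) (by simp),
    Set.ncard_insert_of_notMem (by simp [d23, d24]) (by simp),
    Set.ncard_pair d34]

end Comp

section Orbit
variable (hm : 3 ≤ m) (lab : ZMod m → L) (succ : Fin 4 → L → ZMod 4 → Finset (ZMod 4))
  {T : L → L → Prop}
include hm

lemma SG_orbit (hT : ∀ i, T (lab i) (lab (i + 1))) (t : Fin 4) (G : ZMod 4 → L → ZMod 4)
    (hstep : ∀ l l' b, T l l' → succ t l (G b l) = {G b l'})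
    (huniq : ∀ l l' b c, T l l' → G b l' ∈ succ t l c → c = G b l)
    (hcov : ∀ l a, ∃ b, G b l = a) :
    ∀ v, ((SG lab succ t).connectedComponentMk v).supp.ncard = m := by
  haveI : NeZero m := ⟨by omega⟩
  rintro ⟨a, i⟩
  obtain ⟨b, hb⟩ := hcov (lab i) a
  set f : ZMod m → ZMod 4 × ZMod m := fun j => (G b (lab j), j) with hf
  have hadj : ∀ j, (SG lab succ t).Adj (f j) (f (j + 1)) := by
    intro j
    apply (SG_adj hm lab succ).mpr
    exact Or.inl ⟨rfl, by rw [hstep _ _ b (hT j)]; exact Finset.mem_singleton_self _⟩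
  have hreach : ∀ (j : ZMod m) (k : ℕ),
      (SG lab succ t).Reachable (f j) (f (j + (k : ZMod m))) := by
    intro j k
    induction k with
    | zero => simpa using SimpleGraph.Reachable.refl (f j)
    | succ n ih =>
      have he : (j + ((n + 1 : ℕ) : ZMod m)) = (j + (n : ZMod m)) + 1 := by push_cast; ring
      rw [he]
      exact ih.trans (hadj _).reachable
  have hre : ∀ y ∈ Set.range f, (SG lab succ t).Reachable (f i) y := by
    rintro y ⟨j, rfl⟩
    have h := hreach i (j - i).val
    rwa [ZMod.natCast_val, ZMod.cast_id, add_sub_cancel] at h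
  have hsupp : ((SG lab succ t).connectedComponentMk (a, i)).supp = Set.range f := by
    refine supp_eq _ (w := f i) ⟨i, by rw [hf]; simp [hb]⟩ ?_ hre
    rintro x ⟨j, rfl⟩ ⟨c, j'⟩ hadj'
    rcases (SG_adj hm lab succ).mp hadj' with ⟨h1, h2⟩ | ⟨h1, h2⟩
    · subst h1
      rw [hstep _ _ b (hT j)] at h2
      simp only [Finset.mem_singleton] at h2
      exact ⟨j + 1, by rw [hf, h2]⟩
    · rw [h1] at h2
      have hc : c = G b (lab j') := huniq _ _ b c (hT j') h2
      exact ⟨j', by simp only [hf, hc]⟩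
  rw [hsupp]
  have hinj : Function.Injective f := fun x y h => congrArg Prod.snd h
  rw [← Set.image_univ, Set.ncard_image_of_injective _ hinj, Set.ncard_univ,
    Nat.card_eq_fintype_card, ZMod.card]

end Orbit

/-! ### Odd case data -/

def labO (m : ℕ) : ZMod m → Fin 3 × Bool :=
  fun i => (if i.val < m - 2 then 0 else if i.val = m - 2 then 1 else 2, decide (i.val % 2 = 1))

def TO : Fin 3 × Bool → Fin 3 × Bool → Prop := fun l l' =>
  (l.1 = 0 ∧ l'.1 = 0 ∧ l'.2 = !l.2) ∨ (l.1 = 0 ∧ l' = (1, !l.2)) ∨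
  (l = (1, true) ∧ l' = (2, false)) ∨ (l = (2, false) ∧ l' = (0, false))

instance : DecidableRel TO := fun l l' => by unfold TO; exact inferInstance

def succO : Fin 4 → Fin 3 × Bool → ZMod 4 → Finset (ZMod 4) := fun t l a =>
  match t, l.1 with
  | 0, 0 => if a = 2 ∨ a = 3 then {0, 1} else ∅
  | 0, 1 => if a = 2 then {0, 1} else if a = 3 then {2, 3} else ∅
  | 0, 2 => if a = 0 ∨ a = 1 then {0} else {1}
  | 1, 0 => if a = 0 ∨ a = 1 then {2, 3} else ∅
  | 1, 1 => if a = 0 then {0, 2} else if a = 1 then {1, 3} else ∅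
  | 1, 2 => if a = 0 then {2} else if a = 1 then {3} else if a = 2 then {2} else {3}
  | 2, 0 => if a = 0 then {0} else if a = 1 then {1} else if a = 2 then {3} else {2}
  | 2, 1 => if a = 0 then {3} else if a = 1 then {0} else if a = 2 then {2} else {1}
  | 2, 2 => if a = 0 then {1} else if a = 1 then {2} else if a = 2 then {3} else {0}
  | 3, 0 => if a = 0 then {1} else if a = 1 then {0} else if a = 2 then {2} else {3}
  | 3, 1 => if a = 0 then {1} else if a = 1 then {2} else if a = 2 then {3} else {0}
  | 3, 2 => if a = 0 then {3} else if a = 1 then {1} else if a = 2 then {0} else {2}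

def G2O : ZMod 4 → Fin 3 × Bool → ZMod 4 := fun b l =>
  if l.1 = 2 then (if b = 0 then 3 else if b = 1 then 0 else if b = 2 then 1 else 2)
  else if b = 0 then 0 else if b = 1 then 1
  else if b = 2 then (if l.2 then 3 else 2) else (if l.2 then 2 else 3)

def G3O : ZMod 4 → Fin 3 × Bool → ZMod 4 := fun b l =>
  if l.1 = 2 then (if b = 0 then 2 else if b = 1 then 1 else if b = 2 then 3 else 0)
  else if b = 0 then (if l.2 then 1 else 0) else if b = 1 then (if l.2 then 0 else 1)
  else if b = 2 then 2 else 3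

section OddArith
variable (hm : 3 ≤ m)
include hm

lemma val_add_one' (i : ZMod m) : (i + 1).val = if i.val = m - 1 then 0 else i.val + 1 := by
  haveI : NeZero m := ⟨by omega⟩
  haveI : Fact (1 < m) := ⟨by omega⟩
  rw [ZMod.val_add, ZMod.val_one]
  have hv := ZMod.val_lt i
  split_ifs with h
  · have he : i.val + 1 = m := by omega
    rw [he, Nat.mod_self]
  · exact Nat.mod_eq_of_lt (by omega)

omit hm in
lemma parity_succ (k : ℕ) : decide ((k + 1) % 2 = 1) = !decide (k % 2 = 1) := by
  rcases Nat.mod_two_eq_zero_or_one k with h | h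
  · have h1 : (k + 1) % 2 = 1 := by omega
    simp [h, h1]
  · have h1 : (k + 1) % 2 = 0 := by omega
    simp [h, h1]

variable (ho : m % 2 = 1)
include ho

lemma hlab_odd : ∀ i : ZMod m, labO m i = (0, false) ∨ labO m i = (0, true) ∨
    labO m i = (1, true) ∨ labO m i = (2, false) := by
  intro i
  haveI : NeZero m := ⟨by omega⟩
  have hv := ZMod.val_lt i
  unfold labO
  by_cases h1 : i.val < m - 2
  · rcases Nat.mod_two_eq_zero_or_one i.val with h | h
    · exact Or.inl (by rw [if_pos h1]; simp [h])
    · exact Or.inr (Or.inl (by rw [if_pos h1]; simp [h]))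
  · by_cases h2 : i.val = m - 2
    · refine Or.inr (Or.inr (Or.inl ?_))
      rw [if_neg h1, if_pos h2, h2]
      have : (m - 2) % 2 = 1 := by omega
      simp [this]
    · refine Or.inr (Or.inr (Or.inr ?_))
      rw [if_neg h1, if_neg h2]
      have h3 : i.val = m - 1 := by omega
      have : i.val % 2 = 0 := by omega
      simp [this]

lemma hT_odd : ∀ i : ZMod m, TO (labO m i) (labO m (i + 1)) := by
  intro i
  haveI : NeZero m := ⟨by omega⟩
  have hv := ZMod.val_lt i
  have hao := val_add_one' hm i
  by_cases hk1 : i.val = m - 1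
  · have h1 : (i + 1).val = 0 := by rw [hao, if_pos hk1]
    have e1 : labO m i = (2, false) := by
      unfold labO
      rw [if_neg (by omega), if_neg (by omega)]
      have : i.val % 2 = 0 := by omega
      simp [this]
    have e2 : labO m (i + 1) = (0, false) := by
      unfold labO
      rw [h1, if_pos (by omega)]
      simp
    rw [e1, e2]
    exact Or.inr (Or.inr (Or.inr ⟨rfl, rfl⟩))
  · have h1 : (i + 1).val = i.val + 1 := by rw [hao, if_neg hk1]
    by_cases hk2 : i.val = m - 2
    · have e1 : labO m i = (1, true) := by
        unfold labO
        rw [if_neg (by omega), if_pos hk2, hk2]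
        have : (m - 2) % 2 = 1 := by omega
        simp [this]
      have e2 : labO m (i + 1) = (2, false) := by
        unfold labO
        rw [h1, if_neg (by omega), if_neg (by omega)]
        have : (i.val + 1) % 2 = 0 := by omega
        simp [this]
      rw [e1, e2]
      exact Or.inr (Or.inr (Or.inl ⟨rfl, rfl⟩))
    · have hk3 : i.val < m - 2 := by omega
      have e1 : labO m i = (0, decide (i.val % 2 = 1)) := by
        unfold labO
        rw [if_pos hk3]
      by_cases hk4 : i.val + 1 < m - 2
      · have e2 : labO m (i + 1) = (0, decide ((i.val + 1) % 2 = 1)) := by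
          unfold labO
          rw [h1, if_pos hk4]
        rw [e1, e2]
        exact Or.inl ⟨rfl, rfl, parity_succ _⟩
      · have e2 : labO m (i + 1) = (1, decide ((i.val + 1) % 2 = 1)) := by
          unfold labO
          rw [h1, if_neg hk4, if_pos (by omega)]
        rw [e1, e2]
        exact Or.inr (Or.inl ⟨rfl, by rw [parity_succ]⟩)

end OddArith

section OddComp
variable (hm : 3 ≤ m) (ho : m % 2 = 1)
include hm ho

omit hm ho in
lemma pne1 {a b : ZMod 4} {i j : ZMod m} (h : a ≠ b) : (a, i) ≠ (b, j) :=
  fun he => h (congrArg Prod.fst he)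

omit hm ho in
lemma pne2 {a b : ZMod 4} {i j : ZMod m} (h : i ≠ j) : (a, i) ≠ (b, j) :=
  fun he => h (congrArg Prod.snd he)

omit ho in
lemma ne_succ (i : ZMod m) : i ≠ i + 1 := fun h => add_one_ne hm i h.symm

omit ho in
lemma succ_ne_succsucc (i : ZMod m) : i + 1 ≠ i + 2 :=
  fun hh => add_one_ne hm (i + 1) (by linear_combination -hh)

lemma F0_block (i : ZMod m) (p : Bool) (h : labO m i = (0, p)) :
    ∀ v : ZMod 4 × ZMod m,
      (v = (2, i) ∨ v = (0, i + 1) ∨ v = (3, i) ∨ v = (1, i + 1)) →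
      (((SG (labO m) succO 0).connectedComponentMk v).supp).ncard = 4 := by
  intro v hv
  have hT := hT_odd hm ho
  have hli' : labO m (i + 1) = (0, !p) ∨ labO m (i + 1) = (1, !p) := by
    have h1 := hT i
    rw [h] at h1
    revert h1
    exact (by cases p <;> decide :
      ∀ l', TO (0, p) l' → l' = (0, !p) ∨ l' = (1, !p)) _
  have hadj12 : (SG (labO m) succO 0).Adj (2, i) (0, i + 1) := by
    refine (SG_adj hm _ _).mpr (Or.inl ⟨rfl, ?_⟩)
    rw [h]; cases p <;> decide
  have hadj23 : (SG (labO m) succO 0).Adj (0, i + 1) (3, i) := by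
    refine (SG_adj hm _ _).mpr (Or.inr ⟨rfl, ?_⟩)
    rw [h]; cases p <;> decide
  have hadj34 : (SG (labO m) succO 0).Adj (3, i) (1, i + 1) := by
    refine (SG_adj hm _ _).mpr (Or.inl ⟨rfl, ?_⟩)
    rw [h]; cases p <;> decide
  refine comp4 _ hv hadj12 hadj23 hadj34 ?_ (pne1 (by decide)) (pne1 (by decide))
    (pne1 (by decide)) (pne1 (by decide)) (pne1 (by decide)) (pne1 (by decide))
  rintro x hx ⟨c, j⟩ hxy
  rcases hx with rfl | rfl | rfl | rfl
  · rcases (SG_adj hm _ _).mp hxy with ⟨h1, h2⟩ | ⟨h1, h2⟩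
    · rw [h] at h2
      subst h1
      rcases (by cases p <;> decide :
        ∀ c : ZMod 4, c ∈ succO 0 (0, p) 2 → c = 0 ∨ c = 1) c h2 with rfl | rfl
      · exact Or.inr (Or.inl rfl)
      · exact Or.inr (Or.inr (Or.inr rfl))
    · have hTj : TO (labO m j) (0, p) := by
        have h3 := hT j
        rwa [← h1, h] at h3
      exact absurd h2 ((by decide :
        ∀ (l : Fin 3 × Bool) (p' : Bool), TO l (0, p') →
          ∀ c : ZMod 4, (2 : ZMod 4) ∉ succO 0 l c) _ _ hTj c)
  · rcases (SG_adj hm _ _).mp hxy with ⟨h1, h2⟩ | ⟨h1, h2⟩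
    · rcases hli' with hl | hl <;> rw [hl] at h2
      · exact absurd h2 ((by cases p <;> decide :
          ∀ c : ZMod 4, c ∉ succO 0 (0, !p) 0) c)
      · exact absurd h2 ((by cases p <;> decide :
          ∀ c : ZMod 4, c ∉ succO 0 (1, !p) 0) c)
    · have hj : j = i := add_right_cancel h1.symm
      subst hj
      rw [h] at h2
      rcases (by cases p <;> decide :
        ∀ c : ZMod 4, (0 : ZMod 4) ∈ succO 0 (0, p) c → c = 2 ∨ c = 3) c h2 with rfl | rfl
      · exact Or.inl rfl
      · exact Or.inr (Or.inr (Or.inl rfl))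
  · rcases (SG_adj hm _ _).mp hxy with ⟨h1, h2⟩ | ⟨h1, h2⟩
    · rw [h] at h2
      subst h1
      rcases (by cases p <;> decide :
        ∀ c : ZMod 4, c ∈ succO 0 (0, p) 3 → c = 0 ∨ c = 1) c h2 with rfl | rfl
      · exact Or.inr (Or.inl rfl)
      · exact Or.inr (Or.inr (Or.inr rfl))
    · have hTj : TO (labO m j) (0, p) := by
        have h3 := hT j
        rwa [← h1, h] at h3
      exact absurd h2 ((by decide :
        ∀ (l : Fin 3 × Bool) (p' : Bool), TO l (0, p') →
          ∀ c : ZMod 4, (3 : ZMod 4) ∉ succO 0 l c) _ _ hTj c)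
  · rcases (SG_adj hm _ _).mp hxy with ⟨h1, h2⟩ | ⟨h1, h2⟩
    · rcases hli' with hl | hl <;> rw [hl] at h2
      · exact absurd h2 ((by cases p <;> decide :
          ∀ c : ZMod 4, c ∉ succO 0 (0, !p) 1) c)
      · exact absurd h2 ((by cases p <;> decide :
          ∀ c : ZMod 4, c ∉ succO 0 (1, !p) 1) c)
    · have hj : j = i := add_right_cancel h1.symm
      subst hj
      rw [h] at h2
      rcases (by cases p <;> decide :
        ∀ c : ZMod 4, (1 : ZMod 4) ∈ succO 0 (0, p) c → c = 2 ∨ c = 3) c h2 with rfl | rfl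
      · exact Or.inl rfl
      · exact Or.inr (Or.inr (Or.inl rfl))

lemma spec_labels (i : ZMod m) (h : labO m i = (1, true)) :
    labO m (i + 1) = (2, false) ∧ labO m (i + 2) = (0, false) := by
  have hT := hT_odd hm ho
  have h1 := hT i
  rw [h] at h1
  have h2 : labO m (i + 1) = (2, false) :=
    (by decide : ∀ l', TO (1, true) l' → l' = (2, false)) _ h1
  have h3 := hT (i + 1)
  rw [h2] at h3
  have h4 : labO m (i + 1 + 1) = (0, false) :=
    (by decide : ∀ l', TO (2, false) l' → l' = (0, false)) _ h3
  rw [show i + 1 + 1 = i + 2 by ring] at h4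
  exact ⟨h2, h4⟩

lemma F0_spec1 (i : ZMod m) (h : labO m i = (1, true)) :
    ∀ v : ZMod 4 × ZMod m,
      (v = (2, i) ∨ v = (0, i + 1) ∨ v = (0, i + 2) ∨ v = (1, i + 1)) →
      (((SG (labO m) succO 0).connectedComponentMk v).supp).ncard = 4 := by
  intro v hv
  have hT := hT_odd hm ho
  obtain ⟨h2, h3⟩ := spec_labels hm ho i h
  have hadj12 : (SG (labO m) succO 0).Adj (2, i) (0, i + 1) := by
    refine (SG_adj hm _ _).mpr (Or.inl ⟨rfl, ?_⟩)
    rw [h]; decide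
  have hadj23 : (SG (labO m) succO 0).Adj (0, i + 1) (0, i + 2) := by
    refine (SG_adj hm _ _).mpr (Or.inl ⟨by ring, ?_⟩)
    rw [h2]; decide
  have hadj34 : (SG (labO m) succO 0).Adj (0, i + 2) (1, i + 1) := by
    refine (SG_adj hm _ _).mpr (Or.inr ⟨by ring, ?_⟩)
    rw [h2]; decide
  refine comp4 _ hv hadj12 hadj23 hadj34 ?_ (pne1 (by decide)) (pne1 (by decide))
    (pne1 (by decide)) (pne2 (succ_ne_succsucc hm i)) (pne1 (by decide)) (pne1 (by decide))
  rintro x hx ⟨c, j⟩ hxy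
  rcases hx with rfl | rfl | rfl | rfl
  · rcases (SG_adj hm _ _).mp hxy with ⟨h1, hc⟩ | ⟨h1, hc⟩
    · rw [h] at hc
      subst h1
      rcases (by decide : ∀ c : ZMod 4, c ∈ succO 0 (1, true) 2 → c = 0 ∨ c = 1) c hc
        with rfl | rfl
      · exact Or.inr (Or.inl rfl)
      · exact Or.inr (Or.inr (Or.inr rfl))
    · have hTj : TO (labO m j) (1, true) := by
        have h4 := hT j
        rwa [← h1, h] at h4
      exact absurd hc ((by decide : ∀ l : Fin 3 × Bool, TO l (1, true) →
        ∀ c : ZMod 4, (2 : ZMod 4) ∉ succO 0 l c) _ hTj c)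
  · rcases (SG_adj hm _ _).mp hxy with ⟨h1, hc⟩ | ⟨h1, hc⟩
    · rw [h2] at hc
      have hc0 : c = 0 := (by decide : ∀ c : ZMod 4, c ∈ succO 0 (2, false) 0 → c = 0) c hc
      subst hc0
      have hj : j = i + 2 := by rw [h1]; ring
      subst hj
      exact Or.inr (Or.inr (Or.inl rfl))
    · have hj : j = i := add_right_cancel h1.symm
      subst hj
      rw [h] at hc
      have hc2 : c = 2 :=
        (by decide : ∀ c : ZMod 4, (0 : ZMod 4) ∈ succO 0 (1, true) c → c = 2) c hc
      subst hc2
      exact Or.inl rfl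
  · rcases (SG_adj hm _ _).mp hxy with ⟨h1, hc⟩ | ⟨h1, hc⟩
    · rw [h3] at hc
      exact absurd hc ((by decide : ∀ c : ZMod 4, c ∉ succO 0 (0, false) 0) c)
    · have hj : j = i + 1 := by linear_combination -h1
      subst hj
      rw [h2] at hc
      rcases (by decide : ∀ c : ZMod 4, (0 : ZMod 4) ∈ succO 0 (2, false) c → c = 0 ∨ c = 1)
        c hc with rfl | rfl
      · exact Or.inr (Or.inl rfl)
      · exact Or.inr (Or.inr (Or.inr rfl))
  · rcases (SG_adj hm _ _).mp hxy with ⟨h1, hc⟩ | ⟨h1, hc⟩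
    · rw [h2] at hc
      have hc0 : c = 0 := (by decide : ∀ c : ZMod 4, c ∈ succO 0 (2, false) 1 → c = 0) c hc
      subst hc0
      have hj : j = i + 2 := by rw [h1]; ring
      subst hj
      exact Or.inr (Or.inr (Or.inl rfl))
    · have hj : j = i := add_right_cancel h1.symm
      subst hj
      rw [h] at hc
      have hc2 : c = 2 :=
        (by decide : ∀ c : ZMod 4, (1 : ZMod 4) ∈ succO 0 (1, true) c → c = 2) c hc
      subst hc2
      exact Or.inl rfl

lemma F0_spec2 (i : ZMod m) (h : labO m i = (1, true)) :
    ∀ v : ZMod 4 × ZMod m,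
      (v = (3, i) ∨ v = (2, i + 1) ∨ v = (1, i + 2) ∨ v = (3, i + 1)) →
      (((SG (labO m) succO 0).connectedComponentMk v).supp).ncard = 4 := by
  intro v hv
  have hT := hT_odd hm ho
  obtain ⟨h2, h3⟩ := spec_labels hm ho i h
  have hadj12 : (SG (labO m) succO 0).Adj (3, i) (2, i + 1) := by
    refine (SG_adj hm _ _).mpr (Or.inl ⟨rfl, ?_⟩)
    rw [h]; decide
  have hadj23 : (SG (labO m) succO 0).Adj (2, i + 1) (1, i + 2) := by
    refine (SG_adj hm _ _).mpr (Or.inl ⟨by ring, ?_⟩)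
    rw [h2]; decide
  have hadj34 : (SG (labO m) succO 0).Adj (1, i + 2) (3, i + 1) := by
    refine (SG_adj hm _ _).mpr (Or.inr ⟨by ring, ?_⟩)
    rw [h2]; decide
  refine comp4 _ hv hadj12 hadj23 hadj34 ?_ (pne1 (by decide)) (pne1 (by decide))
    (pne2 (ne_succ hm i)) (pne1 (by decide)) (pne1 (by decide)) (pne1 (by decide))
  rintro x hx ⟨c, j⟩ hxy
  rcases hx with rfl | rfl | rfl | rfl
  · rcases (SG_adj hm _ _).mp hxy with ⟨h1, hc⟩ | ⟨h1, hc⟩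
    · rw [h] at hc
      subst h1
      rcases (by decide : ∀ c : ZMod 4, c ∈ succO 0 (1, true) 3 → c = 2 ∨ c = 3) c hc
        with rfl | rfl
      · exact Or.inr (Or.inl rfl)
      · exact Or.inr (Or.inr (Or.inr rfl))
    · have hTj : TO (labO m j) (1, true) := by
        have h4 := hT j
        rwa [← h1, h] at h4
      exact absurd hc ((by decide : ∀ l : Fin 3 × Bool, TO l (1, true) →
        ∀ c : ZMod 4, (3 : ZMod 4) ∉ succO 0 l c) _ hTj c)
  · rcases (SG_adj hm _ _).mp hxy with ⟨h1, hc⟩ | ⟨h1, hc⟩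
    · rw [h2] at hc
      have hc0 : c = 1 := (by decide : ∀ c : ZMod 4, c ∈ succO 0 (2, false) 2 → c = 1) c hc
      subst hc0
      have hj : j = i + 2 := by rw [h1]; ring
      subst hj
      exact Or.inr (Or.inr (Or.inl rfl))
    · have hj : j = i := add_right_cancel h1.symm
      subst hj
      rw [h] at hc
      have hc2 : c = 3 :=
        (by decide : ∀ c : ZMod 4, (2 : ZMod 4) ∈ succO 0 (1, true) c → c = 3) c hc
      subst hc2
      exact Or.inl rfl
  · rcases (SG_adj hm _ _).mp hxy with ⟨h1, hc⟩ | ⟨h1, hc⟩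
    · rw [h3] at hc
      exact absurd hc ((by decide : ∀ c : ZMod 4, c ∉ succO 0 (0, false) 1) c)
    · have hj : j = i + 1 := by linear_combination -h1
      subst hj
      rw [h2] at hc
      rcases (by decide : ∀ c : ZMod 4, (1 : ZMod 4) ∈ succO 0 (2, false) c → c = 2 ∨ c = 3)
        c hc with rfl | rfl
      · exact Or.inr (Or.inl rfl)
      · exact Or.inr (Or.inr (Or.inr rfl))
  · rcases (SG_adj hm _ _).mp hxy with ⟨h1, hc⟩ | ⟨h1, hc⟩
    · rw [h2] at hc
      have hc0 : c = 1 := (by decide : ∀ c : ZMod 4, c ∈ succO 0 (2, false) 3 → c = 1) c hc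
      subst hc0
      have hj : j = i + 2 := by rw [h1]; ring
      subst hj
      exact Or.inr (Or.inr (Or.inl rfl))
    · have hj : j = i := add_right_cancel h1.symm
      subst hj
      rw [h] at hc
      have hc2 : c = 3 :=
        (by decide : ∀ c : ZMod 4, (3 : ZMod 4) ∈ succO 0 (1, true) c → c = 3) c hc
      subst hc2
      exact Or.inl rfl

lemma F0_comp : ∀ v : ZMod 4 × ZMod m,
    (((SG (labO m) succO 0).connectedComponentMk v).supp).ncard = 4 := by
  rintro ⟨a, i⟩
  have hT := hT_odd hm ho
  have hsub : i - 1 + 1 = i := sub_add_cancel i 1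
  have hsub2 : i - 2 + 2 = i := sub_add_cancel i 2
  have hblockpred : ∀ p : Bool, labO m i = (0, p) →
      labO m (i - 1) = (0, !p) ∨ labO m (i - 1) = (2, false) := by
    intro p h
    have hTim : TO (labO m (i - 1)) (0, p) := by
      have h5 := hT (i - 1); rwa [hsub, h] at h5
    exact (by decide : ∀ l (p' : Bool), TO l (0, p') →
      l = (0, !p') ∨ l = (2, false)) _ _ hTim
  have hspecpred : labO m (i - 1) = (2, false) → labO m (i - 2) = (1, true) := by
    intro hl
    have hTim2 : TO (labO m (i - 2)) (2, false) := by
      have h5 := hT (i - 2)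
      rw [show i - 2 + 1 = i - 1 by ring] at h5
      rwa [hl] at h5
    exact (by decide : ∀ l, TO l (2, false) → l = (1, true)) _ hTim2
  have hcase : (∃ p, labO m i = (0, p)) ∨ labO m i = (1, true) ∨ labO m i = (2, false) := by
    rcases hlab_odd hm ho i with h | h | h | h
    · exact Or.inl ⟨false, h⟩
    · exact Or.inl ⟨true, h⟩
    · exact Or.inr (Or.inl h)
    · exact Or.inr (Or.inr h)
  rcases hcase with ⟨p, h⟩ | h | h
  · rcases (by decide : ∀ a : ZMod 4, a = 0 ∨ a = 1 ∨ a = 2 ∨ a = 3) a with rfl | rfl | rfl | rfl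
    · rcases hblockpred p h with hl | hl
      · exact F0_block hm ho (i - 1) (!p) hl (0, i) (Or.inr (Or.inl (by rw [hsub])))
      · exact F0_spec1 hm ho (i - 2) (hspecpred hl) (0, i)
          (Or.inr (Or.inr (Or.inl (by rw [hsub2]))))
    · rcases hblockpred p h with hl | hl
      · exact F0_block hm ho (i - 1) (!p) hl (1, i) (Or.inr (Or.inr (Or.inr (by rw [hsub]))))
      · exact F0_spec2 hm ho (i - 2) (hspecpred hl) (1, i)
          (Or.inr (Or.inr (Or.inl (by rw [hsub2]))))
    · exact F0_block hm ho i p h (2, i) (Or.inl rfl)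
    · exact F0_block hm ho i p h (3, i) (Or.inr (Or.inr (Or.inl rfl)))
  · rcases (by decide : ∀ a : ZMod 4, a = 0 ∨ a = 1 ∨ a = 2 ∨ a = 3) a with rfl | rfl | rfl | rfl
    · have hl : labO m (i - 1) = (0, false) := by
        have hTim : TO (labO m (i - 1)) (1, true) := by
          have h5 := hT (i - 1); rwa [hsub, h] at h5
        exact (by decide : ∀ l, TO l (1, true) → l = (0, false)) _ hTim
      exact F0_block hm ho (i - 1) false hl (0, i) (Or.inr (Or.inl (by rw [hsub])))
    · have hl : labO m (i - 1) = (0, false) := by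
        have hTim : TO (labO m (i - 1)) (1, true) := by
          have h5 := hT (i - 1); rwa [hsub, h] at h5
        exact (by decide : ∀ l, TO l (1, true) → l = (0, false)) _ hTim
      exact F0_block hm ho (i - 1) false hl (1, i) (Or.inr (Or.inr (Or.inr (by rw [hsub]))))
    · exact F0_spec1 hm ho i h (2, i) (Or.inl rfl)
    · exact F0_spec2 hm ho i h (3, i) (Or.inl rfl)
  · have hl : labO m (i - 1) = (1, true) := by
      have hTim : TO (labO m (i - 1)) (2, false) := by
        have h5 := hT (i - 1); rwa [hsub, h] at h5
      exact (by decide : ∀ l, TO l (2, false) → l = (1, true)) _ hTim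
    rcases (by decide : ∀ a : ZMod 4, a = 0 ∨ a = 1 ∨ a = 2 ∨ a = 3) a with rfl | rfl | rfl | rfl
    · exact F0_spec1 hm ho (i - 1) hl (0, i) (Or.inr (Or.inl (by rw [hsub])))
    · exact F0_spec1 hm ho (i - 1) hl (1, i) (Or.inr (Or.inr (Or.inr (by rw [hsub]))))
    · exact F0_spec2 hm ho (i - 1) hl (2, i) (Or.inr (Or.inl (by rw [hsub])))
    · exact F0_spec2 hm ho (i - 1) hl (3, i) (Or.inr (Or.inr (Or.inr (by rw [hsub]))))

lemma F1_block (i : ZMod m) (p : Bool) (h : labO m i = (0, p)) :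
    ∀ v : ZMod 4 × ZMod m,
      (v = (0, i) ∨ v = (2, i + 1) ∨ v = (1, i) ∨ v = (3, i + 1)) →
      (((SG (labO m) succO 1).connectedComponentMk v).supp).ncard = 4 := by
  intro v hv
  have hT := hT_odd hm ho
  have hli' : labO m (i + 1) = (0, !p) ∨ labO m (i + 1) = (1, !p) := by
    have h1 := hT i
    rw [h] at h1
    exact (by cases p <;> decide :
      ∀ l', TO (0, p) l' → l' = (0, !p) ∨ l' = (1, !p)) _ h1
  have hadj12 : (SG (labO m) succO 1).Adj (0, i) (2, i + 1) := by
    refine (SG_adj hm _ _).mpr (Or.inl ⟨rfl, ?_⟩)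
    rw [h]; cases p <;> decide
  have hadj23 : (SG (labO m) succO 1).Adj (2, i + 1) (1, i) := by
    refine (SG_adj hm _ _).mpr (Or.inr ⟨rfl, ?_⟩)
    rw [h]; cases p <;> decide
  have hadj34 : (SG (labO m) succO 1).Adj (1, i) (3, i + 1) := by
    refine (SG_adj hm _ _).mpr (Or.inl ⟨rfl, ?_⟩)
    rw [h]; cases p <;> decide
  refine comp4 _ hv hadj12 hadj23 hadj34 ?_ (pne1 (by decide)) (pne1 (by decide))
    (pne1 (by decide)) (pne1 (by decide)) (pne1 (by decide)) (pne1 (by decide))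
  rintro x hx ⟨c, j⟩ hxy
  rcases hx with rfl | rfl | rfl | rfl
  · rcases (SG_adj hm _ _).mp hxy with ⟨h1, h2⟩ | ⟨h1, h2⟩
    · rw [h] at h2
      subst h1
      rcases (by cases p <;> decide :
        ∀ c : ZMod 4, c ∈ succO 1 (0, p) 0 → c = 2 ∨ c = 3) c h2 with rfl | rfl
      · exact Or.inr (Or.inl rfl)
      · exact Or.inr (Or.inr (Or.inr rfl))
    · have hTj : TO (labO m j) (0, p) := by
        have h3 := hT j
        rwa [← h1, h] at h3
      exact absurd h2 ((by decide :
        ∀ (l : Fin 3 × Bool) (p' : Bool), TO l (0, p') →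
          ∀ c : ZMod 4, (0 : ZMod 4) ∉ succO 1 l c) _ _ hTj c)
  · rcases (SG_adj hm _ _).mp hxy with ⟨h1, h2⟩ | ⟨h1, h2⟩
    · rcases hli' with hl | hl <;> rw [hl] at h2
      · exact absurd h2 ((by cases p <;> decide :
          ∀ c : ZMod 4, c ∉ succO 1 (0, !p) 2) c)
      · exact absurd h2 ((by cases p <;> decide :
          ∀ c : ZMod 4, c ∉ succO 1 (1, !p) 2) c)
    · have hj : j = i := add_right_cancel h1.symm
      subst hj
      rw [h] at h2
      rcases (by cases p <;> decide :
        ∀ c : ZMod 4, (2 : ZMod 4) ∈ succO 1 (0, p) c → c = 0 ∨ c = 1) c h2 with rfl | rfl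
      · exact Or.inl rfl
      · exact Or.inr (Or.inr (Or.inl rfl))
  · rcases (SG_adj hm _ _).mp hxy with ⟨h1, h2⟩ | ⟨h1, h2⟩
    · rw [h] at h2
      subst h1
      rcases (by cases p <;> decide :
        ∀ c : ZMod 4, c ∈ succO 1 (0, p) 1 → c = 2 ∨ c = 3) c h2 with rfl | rfl
      · exact Or.inr (Or.inl rfl)
      · exact Or.inr (Or.inr (Or.inr rfl))
    · have hTj : TO (labO m j) (0, p) := by
        have h3 := hT j
        rwa [← h1, h] at h3
      exact absurd h2 ((by decide :
        ∀ (l : Fin 3 × Bool) (p' : Bool), TO l (0, p') →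
          ∀ c : ZMod 4, (1 : ZMod 4) ∉ succO 1 l c) _ _ hTj c)
  · rcases (SG_adj hm _ _).mp hxy with ⟨h1, h2⟩ | ⟨h1, h2⟩
    · rcases hli' with hl | hl <;> rw [hl] at h2
      · exact absurd h2 ((by cases p <;> decide :
          ∀ c : ZMod 4, c ∉ succO 1 (0, !p) 3) c)
      · exact absurd h2 ((by cases p <;> decide :
          ∀ c : ZMod 4, c ∉ succO 1 (1, !p) 3) c)
    · have hj : j = i := add_right_cancel h1.symm
      subst hj
      rw [h] at h2
      rcases (by cases p <;> decide :
        ∀ c : ZMod 4, (3 : ZMod 4) ∈ succO 1 (0, p) c → c = 0 ∨ c = 1) c h2 with rfl | rfl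
      · exact Or.inl rfl
      · exact Or.inr (Or.inr (Or.inl rfl))

lemma F1_spec1 (i : ZMod m) (h : labO m i = (1, true)) :
    ∀ v : ZMod 4 × ZMod m,
      (v = (0, i) ∨ v = (0, i + 1) ∨ v = (2, i + 2) ∨ v = (2, i + 1)) →
      (((SG (labO m) succO 1).connectedComponentMk v).supp).ncard = 4 := by
  intro v hv
  have hT := hT_odd hm ho
  obtain ⟨h2, h3⟩ := spec_labels hm ho i h
  have hadj12 : (SG (labO m) succO 1).Adj (0, i) (0, i + 1) := by
    refine (SG_adj hm _ _).mpr (Or.inl ⟨rfl, ?_⟩)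
    rw [h]; decide
  have hadj23 : (SG (labO m) succO 1).Adj (0, i + 1) (2, i + 2) := by
    refine (SG_adj hm _ _).mpr (Or.inl ⟨by ring, ?_⟩)
    rw [h2]; decide
  have hadj34 : (SG (labO m) succO 1).Adj (2, i + 2) (2, i + 1) := by
    refine (SG_adj hm _ _).mpr (Or.inr ⟨by ring, ?_⟩)
    rw [h2]; decide
  refine comp4 _ hv hadj12 hadj23 hadj34 ?_ (pne2 (ne_succ hm i)) (pne1 (by decide))
    (pne1 (by decide)) (pne1 (by decide)) (pne1 (by decide))
    (pne2 (succ_ne_succsucc hm i).symm)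
  rintro x hx ⟨c, j⟩ hxy
  rcases hx with rfl | rfl | rfl | rfl
  · rcases (SG_adj hm _ _).mp hxy with ⟨h1, hc⟩ | ⟨h1, hc⟩
    · rw [h] at hc
      subst h1
      rcases (by decide : ∀ c : ZMod 4, c ∈ succO 1 (1, true) 0 → c = 0 ∨ c = 2) c hc
        with rfl | rfl
      · exact Or.inr (Or.inl rfl)
      · exact Or.inr (Or.inr (Or.inr rfl))
    · have hTj : TO (labO m j) (1, true) := by
        have h4 := hT j
        rwa [← h1, h] at h4
      exact absurd hc ((by decide : ∀ l : Fin 3 × Bool, TO l (1, true) →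
        ∀ c : ZMod 4, (0 : ZMod 4) ∉ succO 1 l c) _ hTj c)
  · rcases (SG_adj hm _ _).mp hxy with ⟨h1, hc⟩ | ⟨h1, hc⟩
    · rw [h2] at hc
      have hc0 : c = 2 := (by decide : ∀ c : ZMod 4, c ∈ succO 1 (2, false) 0 → c = 2) c hc
      subst hc0
      have hj : j = i + 2 := by rw [h1]; ring
      subst hj
      exact Or.inr (Or.inr (Or.inl rfl))
    · have hj : j = i := add_right_cancel h1.symm
      subst hj
      rw [h] at hc
      have hc2 : c = 0 :=
        (by decide : ∀ c : ZMod 4, (0 : ZMod 4) ∈ succO 1 (1, true) c → c = 0) c hc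
      subst hc2
      exact Or.inl rfl
  · rcases (SG_adj hm _ _).mp hxy with ⟨h1, hc⟩ | ⟨h1, hc⟩
    · rw [h3] at hc
      exact absurd hc ((by decide : ∀ c : ZMod 4, c ∉ succO 1 (0, false) 2) c)
    · have hj : j = i + 1 := by linear_combination -h1
      subst hj
      rw [h2] at hc
      rcases (by decide : ∀ c : ZMod 4, (2 : ZMod 4) ∈ succO 1 (2, false) c → c = 0 ∨ c = 2)
        c hc with rfl | rfl
      · exact Or.inr (Or.inl rfl)
      · exact Or.inr (Or.inr (Or.inr rfl))
  · rcases (SG_adj hm _ _).mp hxy with ⟨h1, hc⟩ | ⟨h1, hc⟩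
    · rw [h2] at hc
      have hc0 : c = 2 := (by decide : ∀ c : ZMod 4, c ∈ succO 1 (2, false) 2 → c = 2) c hc
      subst hc0
      have hj : j = i + 2 := by rw [h1]; ring
      subst hj
      exact Or.inr (Or.inr (Or.inl rfl))
    · have hj : j = i := add_right_cancel h1.symm
      subst hj
      rw [h] at hc
      have hc2 : c = 0 :=
        (by decide : ∀ c : ZMod 4, (2 : ZMod 4) ∈ succO 1 (1, true) c → c = 0) c hc
      subst hc2
      exact Or.inl rfl

lemma F1_spec2 (i : ZMod m) (h : labO m i = (1, true)) :
    ∀ v : ZMod 4 × ZMod m,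
      (v = (1, i) ∨ v = (1, i + 1) ∨ v = (3, i + 2) ∨ v = (3, i + 1)) →
      (((SG (labO m) succO 1).connectedComponentMk v).supp).ncard = 4 := by
  intro v hv
  have hT := hT_odd hm ho
  obtain ⟨h2, h3⟩ := spec_labels hm ho i h
  have hadj12 : (SG (labO m) succO 1).Adj (1, i) (1, i + 1) := by
    refine (SG_adj hm _ _).mpr (Or.inl ⟨rfl, ?_⟩)
    rw [h]; decide
  have hadj23 : (SG (labO m) succO 1).Adj (1, i + 1) (3, i + 2) := by
    refine (SG_adj hm _ _).mpr (Or.inl ⟨by ring, ?_⟩)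
    rw [h2]; decide
  have hadj34 : (SG (labO m) succO 1).Adj (3, i + 2) (3, i + 1) := by
    refine (SG_adj hm _ _).mpr (Or.inr ⟨by ring, ?_⟩)
    rw [h2]; decide
  refine comp4 _ hv hadj12 hadj23 hadj34 ?_ (pne2 (ne_succ hm i)) (pne1 (by decide))
    (pne1 (by decide)) (pne1 (by decide)) (pne1 (by decide))
    (pne2 (succ_ne_succsucc hm i).symm)
  rintro x hx ⟨c, j⟩ hxy
  rcases hx with rfl | rfl | rfl | rfl
  · rcases (SG_adj hm _ _).mp hxy with ⟨h1, hc⟩ | ⟨h1, hc⟩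
    · rw [h] at hc
      subst h1
      rcases (by decide : ∀ c : ZMod 4, c ∈ succO 1 (1, true) 1 → c = 1 ∨ c = 3) c hc
        with rfl | rfl
      · exact Or.inr (Or.inl rfl)
      · exact Or.inr (Or.inr (Or.inr rfl))
    · have hTj : TO (labO m j) (1, true) := by
        have h4 := hT j
        rwa [← h1, h] at h4
      exact absurd hc ((by decide : ∀ l : Fin 3 × Bool, TO l (1, true) →
        ∀ c : ZMod 4, (1 : ZMod 4) ∉ succO 1 l c) _ hTj c)
  · rcases (SG_adj hm _ _).mp hxy with ⟨h1, hc⟩ | ⟨h1, hc⟩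
    · rw [h2] at hc
      have hc0 : c = 3 := (by decide : ∀ c : ZMod 4, c ∈ succO 1 (2, false) 1 → c = 3) c hc
      subst hc0
      have hj : j = i + 2 := by rw [h1]; ring
      subst hj
      exact Or.inr (Or.inr (Or.inl rfl))
    · have hj : j = i := add_right_cancel h1.symm
      subst hj
      rw [h] at hc
      have hc2 : c = 1 :=
        (by decide : ∀ c : ZMod 4, (1 : ZMod 4) ∈ succO 1 (1, true) c → c = 1) c hc
      subst hc2
      exact Or.inl rfl
  · rcases (SG_adj hm _ _).mp hxy with ⟨h1, hc⟩ | ⟨h1, hc⟩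
    · rw [h3] at hc
      exact absurd hc ((by decide : ∀ c : ZMod 4, c ∉ succO 1 (0, false) 3) c)
    · have hj : j = i + 1 := by linear_combination -h1
      subst hj
      rw [h2] at hc
      rcases (by decide : ∀ c : ZMod 4, (3 : ZMod 4) ∈ succO 1 (2, false) c → c = 1 ∨ c = 3)
        c hc with rfl | rfl
      · exact Or.inr (Or.inl rfl)
      · exact Or.inr (Or.inr (Or.inr rfl))
  · rcases (SG_adj hm _ _).mp hxy with ⟨h1, hc⟩ | ⟨h1, hc⟩
    · rw [h2] at hc
      have hc0 : c = 3 := (by decide : ∀ c : ZMod 4, c ∈ succO 1 (2, false) 3 → c = 3) c hc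
      subst hc0
      have hj : j = i + 2 := by rw [h1]; ring
      subst hj
      exact Or.inr (Or.inr (Or.inl rfl))
    · have hj : j = i := add_right_cancel h1.symm
      subst hj
      rw [h] at hc
      have hc2 : c = 1 :=
        (by decide : ∀ c : ZMod 4, (3 : ZMod 4) ∈ succO 1 (1, true) c → c = 1) c hc
      subst hc2
      exact Or.inl rfl

lemma F1_comp : ∀ v : ZMod 4 × ZMod m,
    (((SG (labO m) succO 1).connectedComponentMk v).supp).ncard = 4 := by
  rintro ⟨a, i⟩
  have hT := hT_odd hm ho
  have hsub : i - 1 + 1 = i := sub_add_cancel i 1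
  have hsub2 : i - 2 + 2 = i := sub_add_cancel i 2
  have hblockpred : ∀ p : Bool, labO m i = (0, p) →
      labO m (i - 1) = (0, !p) ∨ labO m (i - 1) = (2, false) := by
    intro p h
    have hTim : TO (labO m (i - 1)) (0, p) := by
      have h5 := hT (i - 1); rwa [hsub, h] at h5
    exact (by decide : ∀ l (p' : Bool), TO l (0, p') →
      l = (0, !p') ∨ l = (2, false)) _ _ hTim
  have hspecpred : labO m (i - 1) = (2, false) → labO m (i - 2) = (1, true) := by
    intro hl
    have hTim2 : TO (labO m (i - 2)) (2, false) := by
      have h5 := hT (i - 2)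
      rw [show i - 2 + 1 = i - 1 by ring] at h5
      rwa [hl] at h5
    exact (by decide : ∀ l, TO l (2, false) → l = (1, true)) _ hTim2
  have hcase : (∃ p, labO m i = (0, p)) ∨ labO m i = (1, true) ∨ labO m i = (2, false) := by
    rcases hlab_odd hm ho i with h | h | h | h
    · exact Or.inl ⟨false, h⟩
    · exact Or.inl ⟨true, h⟩
    · exact Or.inr (Or.inl h)
    · exact Or.inr (Or.inr h)
  rcases hcase with ⟨p, h⟩ | h | h
  · rcases (by decide : ∀ a : ZMod 4, a = 0 ∨ a = 1 ∨ a = 2 ∨ a = 3) a with rfl | rfl | rfl | rfl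
    · exact F1_block hm ho i p h (0, i) (Or.inl rfl)
    · exact F1_block hm ho i p h (1, i) (Or.inr (Or.inr (Or.inl rfl)))
    · rcases hblockpred p h with hl | hl
      · exact F1_block hm ho (i - 1) (!p) hl (2, i) (Or.inr (Or.inl (by rw [hsub])))
      · exact F1_spec1 hm ho (i - 2) (hspecpred hl) (2, i)
          (Or.inr (Or.inr (Or.inl (by rw [hsub2]))))
    · rcases hblockpred p h with hl | hl
      · exact F1_block hm ho (i - 1) (!p) hl (3, i) (Or.inr (Or.inr (Or.inr (by rw [hsub]))))
      · exact F1_spec2 hm ho (i - 2) (hspecpred hl) (3, i)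
          (Or.inr (Or.inr (Or.inl (by rw [hsub2]))))
  · rcases (by decide : ∀ a : ZMod 4, a = 0 ∨ a = 1 ∨ a = 2 ∨ a = 3) a with rfl | rfl | rfl | rfl
    · exact F1_spec1 hm ho i h (0, i) (Or.inl rfl)
    · exact F1_spec2 hm ho i h (1, i) (Or.inl rfl)
    · have hl : labO m (i - 1) = (0, false) := by
        have hTim : TO (labO m (i - 1)) (1, true) := by
          have h5 := hT (i - 1); rwa [hsub, h] at h5
        exact (by decide : ∀ l, TO l (1, true) → l = (0, false)) _ hTim
      exact F1_block hm ho (i - 1) false hl (2, i) (Or.inr (Or.inl (by rw [hsub])))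
    · have hl : labO m (i - 1) = (0, false) := by
        have hTim : TO (labO m (i - 1)) (1, true) := by
          have h5 := hT (i - 1); rwa [hsub, h] at h5
        exact (by decide : ∀ l, TO l (1, true) → l = (0, false)) _ hTim
      exact F1_block hm ho (i - 1) false hl (3, i) (Or.inr (Or.inr (Or.inr (by rw [hsub]))))
  · have hl : labO m (i - 1) = (1, true) := by
      have hTim : TO (labO m (i - 1)) (2, false) := by
        have h5 := hT (i - 1); rwa [hsub, h] at h5
      exact (by decide : ∀ l, TO l (2, false) → l = (1, true)) _ hTim
    rcases (by decide : ∀ a : ZMod 4, a = 0 ∨ a = 1 ∨ a = 2 ∨ a = 3) a with rfl | rfl | rfl | rfl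
    · exact F1_spec1 hm ho (i - 1) hl (0, i) (Or.inr (Or.inl (by rw [hsub])))
    · exact F1_spec2 hm ho (i - 1) hl (1, i) (Or.inr (Or.inl (by rw [hsub])))
    · exact F1_spec1 hm ho (i - 1) hl (2, i) (Or.inr (Or.inr (Or.inr (by rw [hsub]))))
    · exact F1_spec2 hm ho (i - 1) hl (3, i) (Or.inr (Or.inr (Or.inr (by rw [hsub]))))

end OddComp

lemma odd_final (hm : 3 ≤ m) (ho : m % 2 = 1) :
    ∃ F : Fin 4 → SimpleGraph (ZMod 4 × ZMod m),
      IsDecompositionF (Cm4 m) F ∧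
      IsCnFactor (Cm4 m) (F 0) 4 ∧ IsCnFactor (Cm4 m) (F 1) 4 ∧
      IsCnFactor (Cm4 m) (F 2) m ∧ IsCnFactor (Cm4 m) (F 3) m := by
  refine ⟨SG (labO m) succO,
    ⟨fun t => SG_le hm _ _ t, ?_, SG_sup hm _ _ (by decide)⟩, ?_, ?_, ?_, ?_⟩
  · intro i j hij
    fin_cases i <;> fin_cases j <;>
      first
        | exact absurd rfl hij
        | exact SG_disj hm (labO m) succO (by decide)
  · exact ⟨SG_le hm _ _ 0, SG_deg hm _ _ (hT_odd hm ho) 0 (by decide), F0_comp hm ho⟩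
  · exact ⟨SG_le hm _ _ 1, SG_deg hm _ _ (hT_odd hm ho) 1 (by decide), F1_comp hm ho⟩
  · exact ⟨SG_le hm _ _ 2, SG_deg hm _ _ (hT_odd hm ho) 2 (by decide),
      SG_orbit hm _ _ (hT_odd hm ho) 2 G2O (by decide) (by decide) (by decide)⟩
  · exact ⟨SG_le hm _ _ 3, SG_deg hm _ _ (hT_odd hm ho) 3 (by decide),
      SG_orbit hm _ _ (hT_odd hm ho) 3 G3O (by decide) (by decide) (by decide)⟩

/-! ### Even case -/

def labE (m : ℕ) : ZMod m → Bool := fun i => decide (i.val % 2 = 1)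

def TE : Bool → Bool → Prop := fun l l' => l' = !l

instance : DecidableRel TE := fun l l' => by unfold TE; exact inferInstance

def succE : Fin 4 → Bool → ZMod 4 → Finset (ZMod 4) := fun t l a =>
  match t with
  | 0 => if l then ∅ else (if a = 0 ∨ a = 1 then {0, 1} else {2, 3})
  | 1 => if l then (if a = 0 ∨ a = 1 then {0, 1} else {2, 3}) else ∅
  | 2 => {a + 2}
  | 3 => if a = 0 then {3} else if a = 1 then {2} else if a = 2 then {1} else {0}

def G2E : ZMod 4 → Bool → ZMod 4 := fun b l => if l then b + 2 else b

def G3E : ZMod 4 → Bool → ZMod 4 := fun b l =>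
  if l then (if b = 0 then 3 else if b = 1 then 2 else if b = 2 then 1 else 0) else b

section EvenArith
variable (hm : 3 ≤ m) (he : m % 2 = 0)
include hm he

lemma hT_even : ∀ i : ZMod m, TE (labE m i) (labE m (i + 1)) := by
  intro i
  haveI : NeZero m := ⟨by omega⟩
  have hv := ZMod.val_lt i
  have hao := val_add_one' hm i
  unfold TE labE
  by_cases hk : i.val = m - 1
  · rw [hao, if_pos hk, hk]
    have h1 : (m - 1) % 2 = 1 := by omega
    simp [h1]
  · rw [hao, if_neg hk]
    exact parity_succ _

end EvenArith

section EvenComp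
variable (hm : 3 ≤ m) (he : m % 2 = 0)
include hm he

omit hm he in
lemma bool_flip {x q : Bool} (h : q = !x) : x = !q := by cases x <;> simp_all

lemma FE_block (t : Fin 4) (q : Bool) (e : ZMod 4)
    (htq : (t = 0 ∧ q = false) ∨ (t = 1 ∧ q = true)) (hee : e = 0 ∨ e = 2)
    (i : ZMod m) (h : labE m i = q) :
    ∀ v : ZMod 4 × ZMod m,
      (v = (e, i) ∨ v = (e, i + 1) ∨ v = (e + 1, i) ∨ v = (e + 1, i + 1)) →
      (((SG (labE m) succE t).connectedComponentMk v).supp).ncard = 4 := by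
  intro v hv
  have hT := hT_even hm he
  have hsub : i - 1 + 1 = i := sub_add_cancel i 1
  have hnext : labE m (i + 1) = !q := by
    have h5 := hT i
    unfold TE at h5
    rw [h] at h5
    exact h5
  have hprev : labE m (i - 1) = !q := by
    have h5 := hT (i - 1)
    unfold TE at h5
    rw [hsub, h] at h5
    exact bool_flip h5
  have hadj12 : (SG (labE m) succE t).Adj (e, i) (e, i + 1) := by
    refine (SG_adj hm _ _).mpr (Or.inl ⟨rfl, ?_⟩)
    rw [h]
    exact (by decide : ∀ (t : Fin 4) (q : Bool) (e : ZMod 4),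
      ((t = 0 ∧ q = false) ∨ (t = 1 ∧ q = true)) → (e = 0 ∨ e = 2) →
        e ∈ succE t q e) t q e htq hee
  have hadj23 : (SG (labE m) succE t).Adj (e, i + 1) (e + 1, i) := by
    refine (SG_adj hm _ _).mpr (Or.inr ⟨rfl, ?_⟩)
    rw [h]
    exact (by decide : ∀ (t : Fin 4) (q : Bool) (e : ZMod 4),
      ((t = 0 ∧ q = false) ∨ (t = 1 ∧ q = true)) → (e = 0 ∨ e = 2) →
        e ∈ succE t q (e + 1)) t q e htq hee
  have hadj34 : (SG (labE m) succE t).Adj (e + 1, i) (e + 1, i + 1) := by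
    refine (SG_adj hm _ _).mpr (Or.inl ⟨rfl, ?_⟩)
    rw [h]
    exact (by decide : ∀ (t : Fin 4) (q : Bool) (e : ZMod 4),
      ((t = 0 ∧ q = false) ∨ (t = 1 ∧ q = true)) → (e = 0 ∨ e = 2) →
        e + 1 ∈ succE t q (e + 1)) t q e htq hee
  have hene : e ≠ e + 1 :=
    (by decide : ∀ e : ZMod 4, (e = 0 ∨ e = 2) → e ≠ e + 1) e hee
  refine comp4 _ hv hadj12 hadj23 hadj34 ?_ (pne2 (ne_succ hm i)) (pne1 hene)
    (pne1 hene) (pne1 hene) (pne1 hene) (pne2 (ne_succ hm i))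
  have hD3 : ∀ c b : ZMod 4, b ∉ succE t (!q) c :=
    (by decide : ∀ (t : Fin 4) (q : Bool),
      ((t = 0 ∧ q = false) ∨ (t = 1 ∧ q = true)) →
        ∀ c b : ZMod 4, b ∉ succE t (!q) c) t q htq
  have hD1 : ∀ c : ZMod 4, c ∈ succE t q e → c = e ∨ c = e + 1 :=
    (by decide : ∀ (t : Fin 4) (q : Bool) (e : ZMod 4),
      ((t = 0 ∧ q = false) ∨ (t = 1 ∧ q = true)) → (e = 0 ∨ e = 2) →
        ∀ c : ZMod 4, c ∈ succE t q e → c = e ∨ c = e + 1) t q e htq hee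
  have hD2 : ∀ c : ZMod 4, c ∈ succE t q (e + 1) → c = e ∨ c = e + 1 :=
    (by decide : ∀ (t : Fin 4) (q : Bool) (e : ZMod 4),
      ((t = 0 ∧ q = false) ∨ (t = 1 ∧ q = true)) → (e = 0 ∨ e = 2) →
        ∀ c : ZMod 4, c ∈ succE t q (e + 1) → c = e ∨ c = e + 1) t q e htq hee
  have hD4 : ∀ c : ZMod 4, e ∈ succE t q c → c = e ∨ c = e + 1 :=
    (by decide : ∀ (t : Fin 4) (q : Bool) (e : ZMod 4),
      ((t = 0 ∧ q = false) ∨ (t = 1 ∧ q = true)) → (e = 0 ∨ e = 2) →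
        ∀ c : ZMod 4, e ∈ succE t q c → c = e ∨ c = e + 1) t q e htq hee
  have hD5 : ∀ c : ZMod 4, e + 1 ∈ succE t q c → c = e ∨ c = e + 1 :=
    (by decide : ∀ (t : Fin 4) (q : Bool) (e : ZMod 4),
      ((t = 0 ∧ q = false) ∨ (t = 1 ∧ q = true)) → (e = 0 ∨ e = 2) →
        ∀ c : ZMod 4, e + 1 ∈ succE t q c → c = e ∨ c = e + 1) t q e htq hee
  rintro x hx ⟨c, j⟩ hxy
  rcases hx with rfl | rfl | rfl | rfl
  · rcases (SG_adj hm _ _).mp hxy with ⟨h1, hc⟩ | ⟨h1, hc⟩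
    · rw [h] at hc
      subst h1
      rcases hD1 c hc with rfl | rfl
      · exact Or.inr (Or.inl rfl)
      · exact Or.inr (Or.inr (Or.inr rfl))
    · have hj : j = i - 1 := by linear_combination -h1
      subst hj
      rw [hprev] at hc
      exact absurd hc (hD3 c e)
  · rcases (SG_adj hm _ _).mp hxy with ⟨h1, hc⟩ | ⟨h1, hc⟩
    · rw [hnext] at hc
      exact absurd hc (hD3 e c)
    · have hj : j = i := add_right_cancel h1.symm
      subst hj
      rw [h] at hc
      rcases hD4 c hc with rfl | rfl
      · exact Or.inl rfl
      · exact Or.inr (Or.inr (Or.inl rfl))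
  · rcases (SG_adj hm _ _).mp hxy with ⟨h1, hc⟩ | ⟨h1, hc⟩
    · rw [h] at hc
      subst h1
      rcases hD2 c hc with rfl | rfl
      · exact Or.inr (Or.inl rfl)
      · exact Or.inr (Or.inr (Or.inr rfl))
    · have hj : j = i - 1 := by linear_combination -h1
      subst hj
      rw [hprev] at hc
      exact absurd hc (hD3 c (e + 1))
  · rcases (SG_adj hm _ _).mp hxy with ⟨h1, hc⟩ | ⟨h1, hc⟩
    · rw [hnext] at hc
      exact absurd hc (hD3 (e + 1) c)
    · have hj : j = i := add_right_cancel h1.symm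
      subst hj
      rw [h] at hc
      rcases hD5 c hc with rfl | rfl
      · exact Or.inl rfl
      · exact Or.inr (Or.inr (Or.inl rfl))

lemma FE_comp (t : Fin 4) (q : Bool)
    (htq : (t = 0 ∧ q = false) ∨ (t = 1 ∧ q = true)) :
    ∀ v : ZMod 4 × ZMod m,
      (((SG (labE m) succE t).connectedComponentMk v).supp).ncard = 4 := by
  rintro ⟨a, i⟩
  have hT := hT_even hm he
  have hsub : i - 1 + 1 = i := sub_add_cancel i 1
  by_cases hb : labE m i = q
  · rcases (by decide : ∀ a : ZMod 4, a = 0 ∨ a = 1 ∨ a = 2 ∨ a = 3) a with rfl | rfl | rfl | rfl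
    · exact FE_block hm he t q 0 htq (Or.inl rfl) i hb (0, i) (Or.inl rfl)
    · exact FE_block hm he t q 0 htq (Or.inl rfl) i hb (1, i)
        (Or.inr (Or.inr (Or.inl (by norm_num))))
    · exact FE_block hm he t q 2 htq (Or.inr rfl) i hb (2, i) (Or.inl rfl)
    · exact FE_block hm he t q 2 htq (Or.inr rfl) i hb (3, i)
        (Or.inr (Or.inr (Or.inl (by norm_num))))
  · have hl : labE m (i - 1) = q := by
      have h5 := hT (i - 1)
      unfold TE at h5
      rw [hsub] at h5
      have h6 := bool_flip h5
      cases q <;> cases hq2 : labE m i <;> simp_all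
    rcases (by decide : ∀ a : ZMod 4, a = 0 ∨ a = 1 ∨ a = 2 ∨ a = 3) a with rfl | rfl | rfl | rfl
    · exact FE_block hm he t q 0 htq (Or.inl rfl) (i - 1) hl (0, i)
        (Or.inr (Or.inl (by rw [hsub])))
    · exact FE_block hm he t q 0 htq (Or.inl rfl) (i - 1) hl (1, i)
        (Or.inr (Or.inr (Or.inr (by rw [hsub]; norm_num))))
    · exact FE_block hm he t q 2 htq (Or.inr rfl) (i - 1) hl (2, i)
        (Or.inr (Or.inl (by rw [hsub])))
    · exact FE_block hm he t q 2 htq (Or.inr rfl) (i - 1) hl (3, i)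
        (Or.inr (Or.inr (Or.inr (by rw [hsub]; norm_num))))

end EvenComp

lemma even_final (hm : 3 ≤ m) (he : m % 2 = 0) :
    ∃ F : Fin 4 → SimpleGraph (ZMod 4 × ZMod m),
      IsDecompositionF (Cm4 m) F ∧
      IsCnFactor (Cm4 m) (F 0) 4 ∧ IsCnFactor (Cm4 m) (F 1) 4 ∧
      IsCnFactor (Cm4 m) (F 2) m ∧ IsCnFactor (Cm4 m) (F 3) m := by
  refine ⟨SG (labE m) succE,
    ⟨fun t => SG_le hm _ _ t, ?_, SG_sup hm _ _ (by decide)⟩, ?_, ?_, ?_, ?_⟩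
  · intro i j hij
    fin_cases i <;> fin_cases j <;>
      first
        | exact absurd rfl hij
        | exact SG_disj hm (labE m) succE (by decide)
  · exact ⟨SG_le hm _ _ 0, SG_deg hm _ _ (hT_even hm he) 0 (by decide),
      FE_comp hm he 0 false (Or.inl ⟨rfl, rfl⟩)⟩
  · exact ⟨SG_le hm _ _ 1, SG_deg hm _ _ (hT_even hm he) 1 (by decide),
      FE_comp hm he 1 true (Or.inr ⟨rfl, rfl⟩)⟩
  · exact ⟨SG_le hm _ _ 2, SG_deg hm _ _ (hT_even hm he) 2 (by decide),
      SG_orbit hm _ _ (hT_even hm he) 2 G2E (by decide) (by decide) (by decide)⟩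
  · exact ⟨SG_le hm _ _ 3, SG_deg hm _ _ (hT_even hm he) 3 (by decide),
      SG_orbit hm _ _ (hT_even hm he) 3 G3E (by decide) (by decide) (by decide)⟩

end CmProof

/-- For every `m ≥ 3`, `C_m[4]` has a 2-factorization into exactly two
`C_4`-factors and two `C_m`-factors. -/
theorem stmt_3 (m : ℕ) (hm : 3 ≤ m) :
    ∃ F : Fin 4 → SimpleGraph (ZMod 4 × ZMod m),
      IsDecompositionF (Cm4 m) F ∧
      IsCnFactor (Cm4 m) (F 0) 4 ∧ IsCnFactor (Cm4 m) (F 1) 4 ∧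
      IsCnFactor (Cm4 m) (F 2) m ∧ IsCnFactor (Cm4 m) (F 3) m := by
  rcases Nat.mod_two_eq_zero_or_one m with he | ho
  · exact CmProof.even_final hm he
  · exact CmProof.odd_final hm ho
end

section
/- For every odd integer m ≥ 3 and any C_m-factor F of C_m[4]: since m is odd, each m-cycle of F contains exactly one vertex from each 'column' {(a,i) : a ∈ Z_4} of C_m[4]. Consequently, if F_1, F_2, F_3 are three pairwise edge-disjoint C_m-factors of C_m[4], then the complement graph C_m[4] − (F_1 ∪ F_2 ∪ F_3) is a 2-regular graph in which every vertex (a,i) has exactly one neighbour in column i−1 and exactly one neighbour in column i+1; in particular, this complement contains no 4-cycle when m > 4. -/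
open SimpleGraph

/- ---------- auxiliary lemmas ---------- -/

lemma zmod_cast_ne (m k : ℕ) (hk : 0 < k) (hm : k < m) : (k : ZMod m) ≠ 0 := by
  intro h
  have hd : m ∣ k := (ZMod.natCast_eq_zero_iff k m).mp h
  have := Nat.le_of_dvd hk hd
  omega

lemma colstep {m : ℕ} {G : SimpleGraph (ZMod 4 × ZMod m)} (hle : G ≤ Cm4 m)
    {a b : ZMod 4 × ZMod m} (h : G.Adj a b) : b.2 = a.2 + 1 ∨ b.2 = a.2 - 1 := by
  have h' := hle h
  rw [Cm4, SimpleGraph.fromRel_adj] at h'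
  rcases h'.2 with h' | h'
  · left; linear_combination h'
  · right; linear_combination -h'

lemma cm4_adj {m : ℕ} (hm : 3 ≤ m) {a b : ZMod 4 × ZMod m}
    (h : b.2 = a.2 + 1 ∨ b.2 = a.2 - 1) : (Cm4 m).Adj a b := by
  have h1 : (1 : ZMod m) ≠ 0 := by
    have := zmod_cast_ne m 1 (by omega) (by omega)
    simpa using this
  rw [Cm4, SimpleGraph.fromRel_adj]
  constructor
  · rintro rfl
    rcases h with h | h
    · exact h1 (by linear_combination -h)
    · exact h1 (by linear_combination h)
  · rcases h with h | h
    · left; linear_combination h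
    · right; linear_combination -h

/-- counting pairs in a filtered product fiberwise -/
lemma filter_product_card {α β : Type*} [DecidableEq α] [DecidableEq β]
    (s : Finset α) (t : Finset β) (P : α → β → Prop) [∀ a b, Decidable (P a b)] :
    ((s ×ˢ t).filter fun p => P p.1 p.2).card
      = ∑ a ∈ s, (t.filter fun b => P a b).card := by
  classical
  rw [Finset.card_eq_sum_card_fiberwise (f := Prod.fst) (t := s)
    (fun x hx => (Finset.mem_product.mp (Finset.mem_filter.mp hx).1).1)]
  refine Finset.sum_congr rfl ?_
  intro a ha
  have : (((s ×ˢ t).filter fun p => P p.1 p.2).filter fun p => p.1 = a)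
      = (t.filter fun b => P a b).image (fun b => (a, b)) := by
    ext ⟨x, y⟩
    simp only [Finset.mem_filter, Finset.mem_product, Finset.mem_image]
    constructor
    · rintro ⟨⟨⟨hxs, hyt⟩, hP⟩, rfl⟩
      exact ⟨y, ⟨hyt, hP⟩, rfl⟩
    · rintro ⟨b, ⟨hbt, hP⟩, h⟩
      obtain ⟨rfl, rfl⟩ := Prod.mk.injEq .. ▸ h
      exact ⟨⟨⟨ha, hbt⟩, hP⟩, rfl⟩
  rw [this, Finset.card_image_of_injective _ (fun b c h => (Prod.mk.injEq .. ▸ h).2)]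

set_option maxHeartbeats 1000000 in
/-- Key lemma: each component of a `C_m`-factor meets each column exactly once. -/
lemma key {m : ℕ} (hm : 3 ≤ m) (hmo : Odd m)
    (F : SimpleGraph (ZMod 4 × ZMod m)) (hF : IsCnFactor (Cm4 m) F m)
    (v : ZMod 4 × ZMod m) (i : ZMod m) :
    ((F.connectedComponentMk v).supp ∩ {u : ZMod 4 × ZMod m | u.2 = i}).ncard = 1 := by
  classical
  haveI : NeZero m := ⟨by omega⟩
  obtain ⟨hle, hdeg, hsupp⟩ := hF
  set S : Set (ZMod 4 × ZMod m) := (F.connectedComponentMk v).supp with hS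
  have hSfin : S.Finite := Set.toFinite _
  set Sf : Finset (ZMod 4 × ZMod m) := hSfin.toFinset with hSf
  have hmemSf : ∀ u, u ∈ Sf ↔ u ∈ S := fun u => hSfin.mem_toFinset
  have hnb : ∀ w ∈ S, ∀ u, F.Adj w u → u ∈ S := by
    intro w hw u h
    rw [hS, SimpleGraph.ConnectedComponent.mem_supp_iff] at *
    exact (SimpleGraph.ConnectedComponent.sound h.symm.reachable).trans hw
  have hScard : Sf.card = m := by
    rw [← Set.ncard_eq_toFinset_card S hSfin]; exact hsupp v
  -- column counts and edge counts
  set n : ZMod m → ℕ := fun j => (Sf.filter fun u => u.2 = j).card with hn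
  set e : ZMod m → ℕ :=
    fun j => ∑ w ∈ Sf, (Sf.filter fun u => w.2 = j ∧ u.2 = j + 1 ∧ F.Adj w u).card with he
  have h2ne : (2 : ZMod m) ≠ 0 := by
    have := zmod_cast_ne m 2 (by omega) (by omega)
    simpa using this
  have hcolne : ∀ j : ZMod m, j + 1 ≠ j - 1 := by
    intro j h
    exact h2ne (by linear_combination h)
  -- degree split
  have hdsplit : ∀ w ∈ Sf, ∀ j : ZMod m, w.2 = j →
      (Sf.filter fun u => u.2 = j + 1 ∧ F.Adj w u).card
        + (Sf.filter fun u => u.2 = j - 1 ∧ F.Adj w u).card = 2 := by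
    intro w hw j hwj
    have hwS : w ∈ S := (hmemSf w).mp hw
    have hNfin : (F.neighborSet w).Finite := Set.toFinite _
    have hNcard : hNfin.toFinset.card = 2 := by
      rw [← Set.ncard_eq_toFinset_card _ hNfin]; exact hdeg w
    have hf1 : (Sf.filter fun u => u.2 = j + 1 ∧ F.Adj w u)
        = hNfin.toFinset.filter fun u => u.2 = j + 1 := by
      ext u
      simp only [Finset.mem_filter, hmemSf, hNfin.mem_toFinset,
        SimpleGraph.mem_neighborSet]
      constructor
      · rintro ⟨_, hc, ha⟩; exact ⟨ha, hc⟩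
      · rintro ⟨ha, hc⟩; exact ⟨hnb w hwS u ha, hc, ha⟩
    have hf2 : (Sf.filter fun u => u.2 = j - 1 ∧ F.Adj w u)
        = hNfin.toFinset.filter fun u => ¬ (u.2 = j + 1) := by
      ext u
      simp only [Finset.mem_filter, hmemSf, hNfin.mem_toFinset,
        SimpleGraph.mem_neighborSet]
      constructor
      · rintro ⟨_, hc, ha⟩
        refine ⟨ha, ?_⟩
        rw [hc]; exact fun h' => hcolne j h'.symm
      · rintro ⟨ha, hc⟩
        have := colstep hle ha
        rw [hwj] at this
        rcases this with h' | h'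
        · exact absurd h' hc
        · exact ⟨hnb w hwS u ha, h', ha⟩
    rw [hf1, hf2, Finset.card_filter_add_card_filter_not, hNcard]
  -- symmetry of edge counts
  have hsym : ∀ j : ZMod m,
      (∑ w ∈ Sf, (Sf.filter fun u => w.2 = j + 1 ∧ u.2 = j ∧ F.Adj w u).card)
        = e j := by
    intro j
    show _ = ∑ w ∈ Sf, (Sf.filter fun u => w.2 = j ∧ u.2 = j + 1 ∧ F.Adj w u).card
    rw [← filter_product_card Sf Sf (fun w u => w.2 = j + 1 ∧ u.2 = j ∧ F.Adj w u),
      ← filter_product_card Sf Sf (fun w u => w.2 = j ∧ u.2 = j + 1 ∧ F.Adj w u)]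
    refine Finset.card_bij (fun p _ => p.swap) ?_ ?_ ?_
    · rintro ⟨x, y⟩ hp
      simp only [Finset.mem_filter, Finset.mem_product] at hp ⊢
      exact ⟨⟨hp.1.2, hp.1.1⟩, hp.2.2.1, hp.2.1, hp.2.2.2.symm⟩
    · rintro ⟨x, y⟩ _ ⟨x', y'⟩ _ h
      simpa [Prod.ext_iff, and_comm] using h
    · rintro ⟨x, y⟩ hp
      refine ⟨(y, x), ?_, rfl⟩
      simp only [Finset.mem_filter, Finset.mem_product] at hp ⊢
      exact ⟨⟨hp.1.2, hp.1.1⟩, hp.2.2.1, hp.2.1, hp.2.2.2.symm⟩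
  -- main identity : 2 * n j = e j + e (j-1)
  have hmain : ∀ j : ZMod m, 2 * n j = e j + e (j - 1) := by
    intro j
    have hrev : e (j - 1)
        = ∑ w ∈ Sf, (Sf.filter fun u => w.2 = j ∧ u.2 = j - 1 ∧ F.Adj w u).card := by
      rw [← hsym (j - 1)]
      simp only [sub_add_cancel]
    show 2 * (Sf.filter fun u => u.2 = j).card
      = (∑ w ∈ Sf, (Sf.filter fun u => w.2 = j ∧ u.2 = j + 1 ∧ F.Adj w u).card) + e (j - 1)
    rw [hrev]
    rw [← Finset.sum_add_distrib]
    have hcongr : ∀ w ∈ Sf,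
        (Sf.filter fun u => w.2 = j ∧ u.2 = j + 1 ∧ F.Adj w u).card
          + (Sf.filter fun u => w.2 = j ∧ u.2 = j - 1 ∧ F.Adj w u).card
        = if w.2 = j then 2 else 0 := by
      intro w hw
      by_cases hwj : w.2 = j
      · simp only [hwj, if_true, true_and]
        exact hdsplit w hw j hwj
      · simp [hwj]
    rw [Finset.sum_congr rfl hcongr]
    rw [← Finset.sum_filter, Finset.sum_const, smul_eq_mul, mul_comm]
  -- sum of n over all columns is m
  have hsumn : ∑ j : ZMod m, n j = m :=
    ((Finset.card_eq_sum_card_fiberwise (f := fun u => u.2) (t := Finset.univ)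
      (fun x _ => Finset.mem_univ _)).symm).trans hScard
  -- sum of e over all columns is m
  have hsume : ∑ j : ZMod m, e j = m := by
    have h1 : ∑ j : ZMod m, 2 * n j = ∑ j : ZMod m, (e j + e (j - 1)) :=
      Finset.sum_congr rfl (fun j _ => hmain j)
    have h2 : ∑ j : ZMod m, e (j - 1) = ∑ j : ZMod m, e j :=
      Fintype.sum_equiv (Equiv.subRight (1 : ZMod m)) _ _ (fun j => rfl)
    rw [Finset.sum_add_distrib, h2, ← Finset.mul_sum, hsumn] at h1
    omega
  -- every column is nonempty
  have hpos : ∀ j : ZMod m, 1 ≤ n j := by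
    by_contra hcon
    push_neg at hcon
    obtain ⟨j0, hj0⟩ := hcon
    have hnj0 : n j0 = 0 := by omega
    have hej0 : e j0 = 0 := by have := hmain j0; omega
    have hstep : ∀ j : ZMod m, e (j + 1) % 2 = e j % 2 := by
      intro j
      have := hmain (j + 1)
      have h' : e ((j + 1) - 1) = e j := by norm_num
      omega
    have hiter : ∀ k : ℕ, e (j0 + k) % 2 = 0 := by
      intro k
      induction k with
      | zero =>
        have h0 : j0 + ((0 : ℕ) : ZMod m) = j0 := by norm_num
        rw [h0, hej0]
      | succ k ih =>
        have : ((k + 1 : ℕ) : ZMod m) = (k : ZMod m) + 1 := by push_cast; ring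
        rw [this, ← add_assoc, hstep (j0 + k)]
        exact ih
    have hall : ∀ j : ZMod m, e j % 2 = 0 := by
      intro j
      have := hiter (j - j0).val
      have heq : j0 + ((j - j0).val : ZMod m) = j := by
        rw [ZMod.natCast_rightInverse (j - j0)]; ring
      rwa [heq] at this
    have : (∑ j : ZMod m, e j) % 2 = 0 := by
      rw [Finset.sum_nat_mod]
      simp only [hall]
      simp
    rw [hsume] at this
    obtain ⟨t, ht⟩ := hmo
    omega
  -- conclude n i = 1
  have hni : n i = 1 := by
    by_contra hcon
    have h2 : 2 ≤ n i := by have := hpos i; omega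
    have hle' : ∑ j : ZMod m, (if j = i then 2 else 1) ≤ ∑ j : ZMod m, n j := by
      refine Finset.sum_le_sum ?_
      intro j _
      by_cases hj : j = i
      · rw [if_pos hj, hj]; exact h2
      · rw [if_neg hj]; exact hpos j
    have hcalc : ∑ j : ZMod m, (if j = i then 2 else 1) = m + 1 := by
      have : ∀ j : ZMod m, (if j = i then 2 else 1) = 1 + (if j = i then 1 else 0) := by
        intro j; by_cases hj : j = i <;> simp [hj]
      rw [Finset.sum_congr rfl (fun j _ => this j), Finset.sum_add_distrib,
        Finset.sum_ite_eq' Finset.univ i (fun _ => 1)]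
      simp [ZMod.card]
    rw [hcalc, hsumn] at hle'
    omega
  -- translate back to ncard
  have hset : S ∩ {u : ZMod 4 × ZMod m | u.2 = i}
      = ↑(Sf.filter fun u => u.2 = i) := by
    ext u
    simp [hmemSf, Set.mem_inter_iff]
  rw [← hS] at *
  rw [hset, Set.ncard_coe_finset]
  exact hni

/-- every vertex of a `C_m`-factor has exactly one neighbour in each adjacent column -/
lemma nbr_one {m : ℕ} (hm : 3 ≤ m) (hmo : Odd m)
    (F : SimpleGraph (ZMod 4 × ZMod m)) (hF : IsCnFactor (Cm4 m) F m)
    (v : ZMod 4 × ZMod m) :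
    (F.neighborSet v ∩ {u : ZMod 4 × ZMod m | u.2 = v.2 + 1}).ncard = 1 ∧
    (F.neighborSet v ∩ {u : ZMod 4 × ZMod m | u.2 = v.2 - 1}).ncard = 1 := by
  classical
  haveI : NeZero m := ⟨by omega⟩
  obtain ⟨hle, hdeg, hsupp⟩ := hF
  have h2ne : (2 : ZMod m) ≠ 0 := by
    have := zmod_cast_ne m 2 (by omega) (by omega)
    simpa using this
  have hvS : v ∈ (F.connectedComponentMk v).supp := by
    rw [SimpleGraph.ConnectedComponent.mem_supp_iff]
  have hsub : ∀ c : ZMod m,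
      F.neighborSet v ∩ {u : ZMod 4 × ZMod m | u.2 = c}
        ⊆ (F.connectedComponentMk v).supp ∩ {u : ZMod 4 × ZMod m | u.2 = c} := by
    intro c u hu
    refine ⟨?_, hu.2⟩
    rw [SimpleGraph.ConnectedComponent.mem_supp_iff]
    exact SimpleGraph.ConnectedComponent.sound hu.1.symm.reachable
  have hA := Set.ncard_le_ncard (hsub (v.2 + 1)) (Set.toFinite _)
  have hB := Set.ncard_le_ncard (hsub (v.2 - 1)) (Set.toFinite _)
  rw [key hm hmo F ⟨hle, hdeg, hsupp⟩ v (v.2 + 1)] at hA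
  rw [key hm hmo F ⟨hle, hdeg, hsupp⟩ v (v.2 - 1)] at hB
  have hunion : (F.neighborSet v ∩ {u : ZMod 4 × ZMod m | u.2 = v.2 + 1})
      ∪ (F.neighborSet v ∩ {u : ZMod 4 × ZMod m | u.2 = v.2 - 1})
      = F.neighborSet v := by
    ext u
    simp only [Set.mem_union, Set.mem_inter_iff, Set.mem_setOf_eq,
      SimpleGraph.mem_neighborSet]
    constructor
    · rintro (⟨h, _⟩ | ⟨h, _⟩) <;> exact h
    · intro h
      rcases colstep hle h with h' | h'
      · exact Or.inl ⟨h, h'⟩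
      · exact Or.inr ⟨h, h'⟩
  have hdisj : Disjoint (F.neighborSet v ∩ {u : ZMod 4 × ZMod m | u.2 = v.2 + 1})
      (F.neighborSet v ∩ {u : ZMod 4 × ZMod m | u.2 = v.2 - 1}) := by
    rw [Set.disjoint_left]
    rintro u ⟨_, h1⟩ ⟨_, h2⟩
    rw [Set.mem_setOf_eq] at h1 h2
    rw [h1] at h2
    exact h2ne (by linear_combination h2)
  have hcard := Set.ncard_union_eq hdisj (Set.toFinite _) (Set.toFinite _)
  rw [hunion, hdeg v] at hcard
  omega


/-- the leftover graph has exactly one neighbour of `v` in column `c` for `c = v.2 ± 1` -/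
lemma leftover_col {m : ℕ} (hm : 3 ≤ m) (hmo : Odd m)
    (F1 F2 F3 : SimpleGraph (ZMod 4 × ZMod m))
    (h1 : IsCnFactor (Cm4 m) F1 m) (h2 : IsCnFactor (Cm4 m) F2 m)
    (h3 : IsCnFactor (Cm4 m) F3 m)
    (h12 : F1 ⊓ F2 = ⊥) (h13 : F1 ⊓ F3 = ⊥) (h23 : F2 ⊓ F3 = ⊥)
    (v : ZMod 4 × ZMod m) (c : ZMod m) (hc : c = v.2 + 1 ∨ c = v.2 - 1) :
    ((Cm4 m \ (F1 ⊔ F2 ⊔ F3)).neighborSet v ∩ {u : ZMod 4 × ZMod m | u.2 = c}).ncard = 1 := by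
  classical
  haveI : NeZero m := ⟨by omega⟩
  have hone : ∀ F : SimpleGraph (ZMod 4 × ZMod m), IsCnFactor (Cm4 m) F m →
      (F.neighborSet v ∩ {u : ZMod 4 × ZMod m | u.2 = c}).ncard = 1 := by
    intro F hF
    rcases hc with rfl | rfl
    · exact (nbr_one hm hmo F hF v).1
    · exact (nbr_one hm hmo F hF v).2
  obtain ⟨x1, hx1⟩ := Set.ncard_eq_one.mp (hone F1 h1)
  obtain ⟨x2, hx2⟩ := Set.ncard_eq_one.mp (hone F2 h2)
  obtain ⟨x3, hx3⟩ := Set.ncard_eq_one.mp (hone F3 h3)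
  have hx1m : x1 ∈ F1.neighborSet v ∩ {u : ZMod 4 × ZMod m | u.2 = c} := by rw [hx1]; rfl
  have hx2m : x2 ∈ F2.neighborSet v ∩ {u : ZMod 4 × ZMod m | u.2 = c} := by rw [hx2]; rfl
  have hx3m : x3 ∈ F3.neighborSet v ∩ {u : ZMod 4 × ZMod m | u.2 = c} := by rw [hx3]; rfl
  have ha1 : F1.Adj v x1 := hx1m.1
  have ha2 : F2.Adj v x2 := hx2m.1
  have ha3 : F3.Adj v x3 := hx3m.1
  have hne12 : x1 ≠ x2 := by
    rintro rfl
    have : (F1 ⊓ F2).Adj v x1 := ⟨ha1, ha2⟩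
    rw [h12] at this
    simpa using this
  have hne13 : x1 ≠ x3 := by
    rintro rfl
    have : (F1 ⊓ F3).Adj v x1 := ⟨ha1, ha3⟩
    rw [h13] at this
    simpa using this
  have hne23 : x2 ≠ x3 := by
    rintro rfl
    have : (F2 ⊓ F3).Adj v x2 := ⟨ha2, ha3⟩
    rw [h23] at this
    simpa using this
  have hset : (Cm4 m \ (F1 ⊔ F2 ⊔ F3)).neighborSet v ∩ {u : ZMod 4 × ZMod m | u.2 = c}
      = {u : ZMod 4 × ZMod m | u.2 = c} \ {x1, x2, x3} := by
    ext u
    simp only [Set.mem_inter_iff, SimpleGraph.mem_neighborSet, SimpleGraph.sdiff_adj,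
      SimpleGraph.sup_adj, Set.mem_setOf_eq, Set.mem_diff, Set.mem_insert_iff,
      Set.mem_singleton_iff]
    constructor
    · rintro ⟨⟨_, hnadj⟩, hcu⟩
      refine ⟨hcu, ?_⟩
      rintro (rfl | rfl | rfl)
      · exact hnadj (Or.inl (Or.inl ha1))
      · exact hnadj (Or.inl (Or.inr ha2))
      · exact hnadj (Or.inr ha3)
    · rintro ⟨hcu, hnot⟩
      refine ⟨⟨cm4_adj hm ?_, ?_⟩, hcu⟩
      · rcases hc with rfl | rfl
        · exact Or.inl hcu
        · exact Or.inr hcu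
      · rintro ((ha | ha) | ha)
        · exact hnot (Or.inl (by
            have : u ∈ ({x1} : Set (ZMod 4 × ZMod m)) := hx1 ▸ ⟨ha, hcu⟩
            exact this))
        · exact hnot (Or.inr (Or.inl (by
            have : u ∈ ({x2} : Set (ZMod 4 × ZMod m)) := hx2 ▸ ⟨ha, hcu⟩
            exact this)))
        · exact hnot (Or.inr (Or.inr (by
            have : u ∈ ({x3} : Set (ZMod 4 × ZMod m)) := hx3 ▸ ⟨ha, hcu⟩
            exact this)))
  rw [hset]
  have hsub : ({x1, x2, x3} : Set (ZMod 4 × ZMod m)) ⊆ {u : ZMod 4 × ZMod m | u.2 = c} := by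
    rintro u (rfl | rfl | rfl)
    · exact hx1m.2
    · exact hx2m.2
    · exact hx3m.2
  rw [Set.ncard_diff hsub (Set.toFinite _)]
  have hcol4 : ({u : ZMod 4 × ZMod m | u.2 = c}).ncard = 4 := by
    have himg : {u : ZMod 4 × ZMod m | u.2 = c} = (fun a : ZMod 4 => (a, c)) '' Set.univ := by
      ext ⟨a, b⟩
      simp only [Set.mem_setOf_eq, Set.image_univ, Set.mem_range, Prod.mk.injEq]
      constructor
      · rintro rfl; exact ⟨a, rfl, rfl⟩
      · rintro ⟨x, rfl, rfl⟩; rfl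
    rw [himg, Set.ncard_image_of_injective _ (fun a b h => (Prod.mk.injEq .. ▸ h).1),
      Set.ncard_univ, Nat.card_eq_fintype_card, ZMod.card]
  have htriple : ({x1, x2, x3} : Set (ZMod 4 × ZMod m)).ncard = 3 := by
    rw [Set.ncard_insert_of_notMem (by simp [hne12, hne13]) (Set.toFinite _),
      Set.ncard_insert_of_notMem (by simp [hne23]) (Set.toFinite _),
      Set.ncard_singleton]
  rw [hcol4, htriple]

/-- the leftover graph is 2-regular -/
lemma leftover_deg {m : ℕ} (hm : 3 ≤ m) (hmo : Odd m)
    (F1 F2 F3 : SimpleGraph (ZMod 4 × ZMod m))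
    (h1 : IsCnFactor (Cm4 m) F1 m) (h2 : IsCnFactor (Cm4 m) F2 m)
    (h3 : IsCnFactor (Cm4 m) F3 m)
    (h12 : F1 ⊓ F2 = ⊥) (h13 : F1 ⊓ F3 = ⊥) (h23 : F2 ⊓ F3 = ⊥)
    (v : ZMod 4 × ZMod m) :
    ((Cm4 m \ (F1 ⊔ F2 ⊔ F3)).neighborSet v).ncard = 2 := by
  classical
  haveI : NeZero m := ⟨by omega⟩
  set G' := Cm4 m \ (F1 ⊔ F2 ⊔ F3) with hG'
  have hle : G' ≤ Cm4 m := sdiff_le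
  have h2ne : (2 : ZMod m) ≠ 0 := by
    have := zmod_cast_ne m 2 (by omega) (by omega)
    simpa using this
  have hp := leftover_col hm hmo F1 F2 F3 h1 h2 h3 h12 h13 h23 v (v.2 + 1) (Or.inl rfl)
  have hq := leftover_col hm hmo F1 F2 F3 h1 h2 h3 h12 h13 h23 v (v.2 - 1) (Or.inr rfl)
  have hunion : (G'.neighborSet v ∩ {u : ZMod 4 × ZMod m | u.2 = v.2 + 1})
      ∪ (G'.neighborSet v ∩ {u : ZMod 4 × ZMod m | u.2 = v.2 - 1})
      = G'.neighborSet v := by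
    ext u
    simp only [Set.mem_union, Set.mem_inter_iff, Set.mem_setOf_eq,
      SimpleGraph.mem_neighborSet]
    constructor
    · rintro (⟨h, _⟩ | ⟨h, _⟩) <;> exact h
    · intro h
      rcases colstep hle h with h' | h'
      · exact Or.inl ⟨h, h'⟩
      · exact Or.inr ⟨h, h'⟩
  have hdisj : Disjoint (G'.neighborSet v ∩ {u : ZMod 4 × ZMod m | u.2 = v.2 + 1})
      (G'.neighborSet v ∩ {u : ZMod 4 × ZMod m | u.2 = v.2 - 1}) := by
    rw [Set.disjoint_left]
    rintro u ⟨_, hu1⟩ ⟨_, hu2⟩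
    rw [Set.mem_setOf_eq] at hu1 hu2
    rw [hu1] at hu2
    exact h2ne (by linear_combination hu2)
  have hcard := Set.ncard_union_eq hdisj (Set.toFinite _) (Set.toFinite _)
  rw [hunion, hp, hq] at hcard
  exact hcard

/-- For odd `m ≥ 3`: every `C_m`-factor of `C_m[4]` meets each column
`{(a,i) : a ∈ Z_4}` in exactly one vertex per cycle; consequently, removing
three pairwise edge-disjoint `C_m`-factors leaves a 2-regular graph in which
every vertex has exactly one neighbour in each of the two adjacent columns,
and this leftover graph contains no 4-cycle when `m > 4`. -/
theorem stmt_5 (m : ℕ) (hm : 3 ≤ m) (hmo : Odd m) :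
    (∀ F : SimpleGraph (ZMod 4 × ZMod m), IsCnFactor (Cm4 m) F m →
      ∀ (v : ZMod 4 × ZMod m) (i : ZMod m),
        ((F.connectedComponentMk v).supp ∩ {u : ZMod 4 × ZMod m | u.2 = i}).ncard = 1) ∧
    (∀ F1 F2 F3 : SimpleGraph (ZMod 4 × ZMod m),
      IsCnFactor (Cm4 m) F1 m → IsCnFactor (Cm4 m) F2 m → IsCnFactor (Cm4 m) F3 m →
      F1 ⊓ F2 = ⊥ → F1 ⊓ F3 = ⊥ → F2 ⊓ F3 = ⊥ →
      (∀ v, ((Cm4 m \ (F1 ⊔ F2 ⊔ F3)).neighborSet v).ncard = 2) ∧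
      (∀ v : ZMod 4 × ZMod m,
        ((Cm4 m \ (F1 ⊔ F2 ⊔ F3)).neighborSet v ∩
          {u : ZMod 4 × ZMod m | u.2 = v.2 - 1}).ncard = 1 ∧
        ((Cm4 m \ (F1 ⊔ F2 ⊔ F3)).neighborSet v ∩
          {u : ZMod 4 × ZMod m | u.2 = v.2 + 1}).ncard = 1) ∧
      (4 < m → ∀ (v : ZMod 4 × ZMod m) (c : (Cm4 m \ (F1 ⊔ F2 ⊔ F3)).Walk v v),
        c.IsCycle → c.length ≠ 4)) := by
  constructor
  · exact fun F hF v i => key hm hmo F hF v i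
  · intro F1 F2 F3 h1 h2 h3 h12 h13 h23
    refine ⟨leftover_deg hm hmo F1 F2 F3 h1 h2 h3 h12 h13 h23, ?_, ?_⟩
    · intro v
      exact ⟨leftover_col hm hmo F1 F2 F3 h1 h2 h3 h12 h13 h23 v (v.2 - 1) (Or.inr rfl),
        leftover_col hm hmo F1 F2 F3 h1 h2 h3 h12 h13 h23 v (v.2 + 1) (Or.inl rfl)⟩
    · intro hm4 v p hp hlen
      have hle : (Cm4 m \ (F1 ⊔ F2 ⊔ F3)) ≤ Cm4 m := sdiff_le
      have h4ne : (4 : ZMod m) ≠ 0 := by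
        have := zmod_cast_ne m 4 (by omega) (by omega)
        simpa using this
      have uniq : ∀ w u1 u2 : ZMod 4 × ZMod m,
          (Cm4 m \ (F1 ⊔ F2 ⊔ F3)).Adj w u1 → (Cm4 m \ (F1 ⊔ F2 ⊔ F3)).Adj w u2 →
          u1 ≠ u2 → u1.2 = u2.2 → False := by
        intro w u1 u2 ha1 ha2 hne hcol
        rcases colstep hle ha1 with hcu | hcu
        · have hcount := leftover_col hm hmo F1 F2 F3 h1 h2 h3 h12 h13 h23 w (w.2 + 1)
            (Or.inl rfl)
          obtain ⟨x, hx⟩ := Set.ncard_eq_one.mp hcount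
          have m1 : u1 ∈ ({x} : Set (ZMod 4 × ZMod m)) := hx ▸ ⟨ha1, hcu⟩
          have m2 : u2 ∈ ({x} : Set (ZMod 4 × ZMod m)) :=
            hx ▸ ⟨ha2, by rw [Set.mem_setOf_eq, ← hcol]; exact hcu⟩
          exact hne (m1.trans m2.symm)
        · have hcount := leftover_col hm hmo F1 F2 F3 h1 h2 h3 h12 h13 h23 w (w.2 - 1)
            (Or.inr rfl)
          obtain ⟨x, hx⟩ := Set.ncard_eq_one.mp hcount
          have m1 : u1 ∈ ({x} : Set (ZMod 4 × ZMod m)) := hx ▸ ⟨ha1, hcu⟩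
          have m2 : u2 ∈ ({x} : Set (ZMod 4 × ZMod m)) :=
            hx ▸ ⟨ha2, by rw [Set.mem_setOf_eq, ← hcol]; exact hcu⟩
          exact hne (m1.trans m2.symm)
      cases p with
      | nil => simp at hlen
      | cons ha1 p =>
        cases p with
        | nil => simp at hlen
        | cons ha2 p =>
          cases p with
          | nil => simp at hlen
          | cons ha3 p =>
            cases p with
            | nil => simp at hlen
            | cons ha4 p =>
              cases p with
              | cons ha5 p => simp [SimpleGraph.Walk.length_cons] at hlen
              | nil =>
                have hnd := hp.support_nodup
                simp only [SimpleGraph.Walk.support_cons, SimpleGraph.Walk.support_nil,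
                  List.tail_cons, List.nodup_cons, List.mem_cons, List.mem_singleton,
                  List.not_mem_nil, List.nodup_nil, not_or] at hnd
                obtain ⟨⟨hw1w2, hw1w3, hw1v, -⟩, ⟨hw2w3, hw2v, -⟩, ⟨hw3v, -⟩, -⟩ := hnd
                rcases colstep hle ha1 with e1 | e1 <;>
                  rcases colstep hle ha2 with e2 | e2 <;>
                  rcases colstep hle ha3 with e3 | e3 <;>
                  rcases colstep hle ha4 with e4 | e4 <;>
                first
                  | exact h4ne (by linear_combination e1 + e2 + e3 + e4)
                  | exact h4ne (by linear_combination -e1 - e2 - e3 - e4)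
                  | exact uniq _ _ _ ha1.symm ha2 (Ne.symm hw2v)
                      (by linear_combination -e1 - e2)
                  | exact uniq _ _ _ ha2.symm ha3 hw1w3
                      (by linear_combination -e2 - e3)
                  | exact uniq _ _ _ ha3.symm ha4 hw2v
                      (by linear_combination -e3 - e4)
end

section
/- For every integer m ≥ 3, the graph C_m[2] (the lexicographic product of the m-cycle with two independent vertices) admits a 1-factorization, i.e., a partition of its edge set into four perfect matchings. -/
open SimpleGraph

/-- `C_m[2]`: the graph on `Z_2 × Z_m` where `(a,i) ~ (b,j)` iff `i - j ≡ ±1 (mod m)`. -/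
def Cm2 (m : ℕ) : SimpleGraph (ZMod 2 × ZMod m) :=
  SimpleGraph.fromRel (fun u v => v.2 - u.2 = 1)

def gfun : Fin 3 → Fin 4 → ZMod 2
  | 0, k => (k.val % 2 : ℕ)
  | 1, k => (k.val / 2 : ℕ)
  | 2, k => (k.val % 2 + k.val / 2 : ℕ)

lemma g_inj : ∀ a b : Fin 3, a ≠ b → ∀ k j : Fin 4,
    gfun a k = gfun a j → gfun b k = gfun b j → k = j := by decide

lemma g_surj : ∀ a b : Fin 3, a ≠ b → ∀ x y : ZMod 2,
    ∃ k, gfun a k = x ∧ gfun b k = y := by decide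

def cfun (m : ℕ) (i : ZMod m) : Fin 3 :=
  if i.val = m - 1 then 2 else if i.val % 2 = 0 then 0 else 1

lemma cfun_ne (m : ℕ) (hm : 3 ≤ m) (i : ZMod m) : cfun m i ≠ cfun m (i + 1) := by
  haveI : NeZero m := ⟨by omega⟩
  haveI : Fact (1 < m) := ⟨by omega⟩
  have h1 : (i + 1).val = (i.val + 1) % m := by
    rw [ZMod.val_add, ZMod.val_one]
  have h2 : i.val < m := ZMod.val_lt i
  unfold cfun
  rcases eq_or_ne i.val (m - 1) with h | h
  · have hm' : i.val + 1 = m := by omega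
    have h0 : (i + 1).val = 0 := by rw [h1, hm', Nat.mod_self]
    rw [h0, if_pos h]
    have : ¬ (0 = m - 1) := by omega
    rw [if_neg this]
    simp
  · have hlt : i.val + 1 < m := by omega
    have h0 : (i + 1).val = i.val + 1 := by rw [h1, Nat.mod_eq_of_lt hlt]
    rw [h0, if_neg h]
    rcases eq_or_ne (i.val + 1) (m - 1) with h3 | h3
    · rw [if_pos h3]
      split <;> decide
    · rw [if_neg h3]
      rcases Nat.even_or_odd i.val with he | ho
      · have e1 : i.val % 2 = 0 := Nat.even_iff.mp he
        have e2 : (i.val + 1) % 2 = 1 := by omega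
        rw [if_pos e1, if_neg (by omega)]
        decide
      · have e1 : i.val % 2 = 1 := Nat.odd_iff.mp ho
        have e2 : (i.val + 1) % 2 = 0 := by omega
        rw [if_neg (by omega), if_pos e2]
        decide

def ffun (m : ℕ) (k : Fin 4) (i : ZMod m) : ZMod 2 := gfun (cfun m i) k

lemma f_inj (m : ℕ) (hm : 3 ≤ m) (i : ZMod m) (k j : Fin 4)
    (h1 : ffun m k i = ffun m j i) (h2 : ffun m k (i+1) = ffun m j (i+1)) : k = j :=
  g_inj _ _ (cfun_ne m hm i) k j h1 h2

lemma f_surj (m : ℕ) (hm : 3 ≤ m) (i : ZMod m) (x y : ZMod 2) :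
    ∃ k, ffun m k i = x ∧ ffun m k (i+1) = y :=
  g_surj _ _ (cfun_ne m hm i) x y


/-- For every `m ≥ 3`, `C_m[2]` has a 1-factorization into four perfect matchings. -/
theorem stmt_8 (m : ℕ) (hm : 3 ≤ m) :
    ∃ F : Fin 4 → SimpleGraph (ZMod 2 × ZMod m),
      IsDecompositionF (Cm2 m) F ∧ ∀ i, IsPM (Cm2 m) (F i) := by
  haveI : NeZero m := ⟨by omega⟩
  haveI : Fact (1 < m) := ⟨by omega⟩
  have hone : (1 : ZMod m) ≠ 0 := by
    intro h
    have := congrArg ZMod.val h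
    rw [ZMod.val_one, ZMod.val_zero] at this
    exact one_ne_zero this
  have htwo : (2 : ZMod m) ≠ 0 := by
    intro h
    rw [show (2 : ZMod m) = ((2:ℕ) : ZMod m) by push_cast; ring] at h
    rw [ZMod.natCast_eq_zero_iff] at h
    have := Nat.le_of_dvd (by norm_num) h
    omega
  have hz2 : ∀ a x : ZMod 2, a ≠ x → a = 1 - x := by decide
  have hz2' : ∀ x : ZMod 2, x ≠ 1 - x := by decide
  set r : Fin 4 → (ZMod 2 × ZMod m) → (ZMod 2 × ZMod m) → Prop :=
    fun k u v => v.2 - u.2 = 1 ∧ u.1 = ffun m k u.2 ∧ v.1 = 1 - ffun m k v.2 with hr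
  have hle : ∀ k, fromRel (r k) ≤ Cm2 m := by
    intro k u v h
    rw [fromRel_adj] at h
    exact fromRel_adj _ u v |>.mpr ⟨h.1, h.2.imp And.left And.left⟩
  refine ⟨fun k => fromRel (r k), ⟨hle, ?_, ?_⟩, ?_⟩
  · -- pairwise disjoint
    intro k j hkj
    ext u v
    simp only [inf_adj, bot_adj, iff_false, not_and]
    intro hk hj
    rw [fromRel_adj] at hk hj
    obtain ⟨hne, hk⟩ := hk
    obtain ⟨-, hj⟩ := hj
    have hopp : ¬ (v.2 - u.2 = 1 ∧ u.2 - v.2 = 1) := by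
      rintro ⟨h1, h2⟩
      exact htwo (by linear_combination -h1 - h2)
    rcases hk with ⟨hd, ha1, ha2⟩ | ⟨hd, ha1, ha2⟩ <;>
      rcases hj with ⟨hd', hb1, hb2⟩ | ⟨hd', hb1, hb2⟩
    · have h1 : ffun m k u.2 = ffun m j u.2 := by rw [← ha1, ← hb1]
      have h2 : ffun m k v.2 = ffun m j v.2 := by
        have := ha2.symm.trans hb2
        exact sub_right_injective this
      have hv : v.2 = u.2 + 1 := by rw [← hd]; ring
      rw [hv] at h2
      exact hkj (f_inj m hm u.2 k j h1 h2)
    · exact hopp ⟨hd, hd'⟩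
    · exact hopp ⟨hd', hd⟩
    · have h1 : ffun m k v.2 = ffun m j v.2 := by rw [← ha1, ← hb1]
      have h2 : ffun m k u.2 = ffun m j u.2 := by
        have := ha2.symm.trans hb2
        exact sub_right_injective this
      have hv : u.2 = v.2 + 1 := by rw [← hd]; ring
      rw [hv] at h2
      exact hkj (f_inj m hm v.2 k j h1 h2)
  · -- sup = Cm2
    apply le_antisymm (iSup_le hle)
    intro u v huv
    rw [Cm2, fromRel_adj] at huv
    obtain ⟨hne, h | h⟩ := huv
    · obtain ⟨k, hk1, hk2⟩ := f_surj m hm u.2 u.1 (1 - v.1)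
      have hv2 : v.2 = u.2 + 1 := by rw [← h]; ring
      refine iSup_adj.mpr ⟨k, (fromRel_adj _ u v).mpr ⟨hne, Or.inl ⟨h, hk1.symm, ?_⟩⟩⟩
      rw [hv2, hk2]
      ring
    · obtain ⟨k, hk1, hk2⟩ := f_surj m hm v.2 v.1 (1 - u.1)
      have hu2 : u.2 = v.2 + 1 := by rw [← h]; ring
      refine iSup_adj.mpr ⟨k, (fromRel_adj _ u v).mpr ⟨hne, Or.inr ⟨h, hk1.symm, ?_⟩⟩⟩
      rw [hu2, hk2]
      ring
  · -- each is a perfect matching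
    intro k
    refine ⟨hle k, ?_⟩
    rintro ⟨a, i⟩
    rcases eq_or_ne a (ffun m k i) with ha | ha
    · have hset : (fromRel (r k)).neighborSet (a, i) = {(1 - ffun m k (i+1), i+1)} := by
        ext w
        simp only [mem_neighborSet, fromRel_adj, Set.mem_singleton_iff]
        constructor
        · rintro ⟨hne, ⟨h1, h2, h3⟩ | ⟨h1, h2, h3⟩⟩
          · have hw2 : w.2 = i + 1 := by rw [← h1]; ring
            exact Prod.ext_iff.mpr ⟨by rw [h3, hw2], hw2⟩
          · exact absurd (ha.symm.trans h3) (hz2' _)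
        · rintro rfl
          refine ⟨?_, Or.inl ⟨by simp, ha, rfl⟩⟩
          intro hcon
          have := congrArg Prod.snd hcon
          simp only at this
          exact hone (left_eq_add.mp this)
      rw [hset, Set.ncard_singleton]
    · have ha' : a = 1 - ffun m k i := hz2 _ _ ha
      have hset : (fromRel (r k)).neighborSet (a, i) = {(ffun m k (i-1), i-1)} := by
        ext w
        simp only [mem_neighborSet, fromRel_adj, Set.mem_singleton_iff]
        constructor
        · rintro ⟨hne, ⟨h1, h2, h3⟩ | ⟨h1, h2, h3⟩⟩
          · exact absurd h2 ha
          · have hw2 : w.2 = i - 1 := by rw [← h1]; ring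
            exact Prod.ext_iff.mpr ⟨by rw [h2, hw2], hw2⟩
        · rintro rfl
          refine ⟨?_, Or.inr ⟨by simp, rfl, ha'⟩⟩
          intro hcon
          have := congrArg Prod.snd hcon
          simp only at this
          exact hone (by have h := sub_eq_self.mp this.symm; exact h)
      rw [hset, Set.ncard_singleton]
end
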